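/- Let x = (x₁,x₂) ∈ Z² with 0 < x₁ < x₂. Suppose 0 < p_h < p_v < 1. Then τ^f_p(0,x) ≥ β_x · λ_h^{2(x₂+1)} · λ_v^{2(x₁+1)} · p_h^{2‖x‖}. -/

import Mathlib

open MeasureTheory Filter

/-- An edge of the square lattice `ℤ × ℤ`, encoded by its lower-left endpoint `base`
together with its direction: a horizontal edge joins `base` to `base + (1,0)`,
a vertical edge joins `base` to `base + (0,1)`. This encodes exactly the set
`𝔼` of nearest-neighbour edges of `ℤ²`. -/
structure LatticeEdge where
  base : ℤ × ℤ
  horiz : Bool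
deriving DecidableEq

namespace LatticeEdge

/-- First endpoint of an edge. -/
def fst (e : LatticeEdge) : ℤ × ℤ := e.base

/-- Second endpoint of an edge. -/
def snd (e : LatticeEdge) : ℤ × ℤ :=
  if e.horiz then (e.base.1 + 1, e.base.2) else (e.base.1, e.base.2 + 1)

/-- The two endpoints of an edge, as an unordered pair. -/
def ends (e : LatticeEdge) : Sym2 (ℤ × ℤ) := s(e.fst, e.snd)

end LatticeEdge

/-- The graph on `ℤ²` whose edges are the lattice edges belonging to `S`. -/
def graphOf (S : Set LatticeEdge) : SimpleGraph (ℤ × ℤ) where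
  Adj u v := u ≠ v ∧ ∃ e ∈ S, e.ends = s(u, v)
  symm := by
    constructor
    intro u v h
    obtain ⟨hne, e, he, hs⟩ := h
    exact ⟨hne.symm, e, he, hs.trans (Sym2.eq_swap)⟩
  loopless := by
    constructor
    intro u h
    exact h.1 rfl

/-- The graph `(ℤ², 𝔼 ∖ γ)` obtained by deleting the edges of `γ`. -/
def complGraph (γ : Finset LatticeEdge) : SimpleGraph (ℤ × ℤ) :=
  graphOf {e | e ∉ γ}

/-- A finite set `γ` of lattice edges is a *contour* if the graph `(ℤ², 𝔼 ∖ γ)` has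
exactly one finite connected component, and `γ` is minimal with this property:
for every `e ∈ γ`, the graph `(ℤ², 𝔼 ∖ (γ ∖ {e}))` has no finite connected component. -/
def IsContour (γ : Finset LatticeEdge) : Prop :=
  (∃! C : (complGraph γ).ConnectedComponent, C.supp.Finite) ∧
  ∀ e ∈ γ, ∀ C : (graphOf {f | f ∉ γ ∨ f = e}).ConnectedComponent, ¬ C.supp.Finite

/-- A contour `γ` *surrounds* a set `X ⊆ ℤ²` of vertices if `X` is contained in the
vertex set `I_γ` of the (unique) finite connected component of `(ℤ², 𝔼 ∖ γ)`. -/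
def Surrounds (γ : Finset LatticeEdge) (X : Set (ℤ × ℤ)) : Prop :=
  IsContour γ ∧ ∃ C : (complGraph γ).ConnectedComponent, C.supp.Finite ∧ X ⊆ C.supp

/-- `Γ^n_X` : the set of contours of cardinality `n` surrounding `X`. -/
def GammaN (X : Set (ℤ × ℤ)) (n : ℕ) : Set (Finset LatticeEdge) :=
  {γ | Surrounds γ X ∧ γ.card = n}

/-- `‖x‖ = 2(x₁ + x₂ + 2)`, the cardinality of a minimal contour surrounding `{0, x}`. -/
def normC (x : ℤ × ℤ) : ℕ := (2 * (x.1 + x.2 + 2)).toNat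

/-- `β_x` : the number of minimal contours surrounding `{0, x}`. -/
noncomputable def betaX (x : ℤ × ℤ) : ℕ := Nat.card ↥(GammaN {0, x} (normC x))

/-- Number of horizontal edges of `γ`, i.e. `|γ ∩ 𝔼ʰ|`. -/
def hCount (γ : Finset LatticeEdge) : ℕ := (γ.filter fun e => e.horiz = true).card

/-- Number of vertical edges of `γ`, i.e. `|γ ∩ 𝔼ᵛ|`. -/
def vCount (γ : Finset LatticeEdge) : ℕ := (γ.filter fun e => e.horiz = false).card

/-- The dual edge `e*` of a lattice edge `e`.  We identify the dual lattice
`ℤ² + (1/2, 1/2)` with `ℤ²` via `(a,b) ↦ (a + 1/2, b + 1/2)`; under this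
identification the dual edge crossing the horizontal edge `(a,b)–(a+1,b)` joins
`(a, b-1)` to `(a, b)` (a vertical dual edge), and the dual edge crossing the
vertical edge `(a,b)–(a,b+1)` joins `(a-1, b)` to `(a, b)` (a horizontal dual edge). -/
def dualEdge (e : LatticeEdge) : LatticeEdge :=
  if e.horiz then ⟨(e.base.1, e.base.2 - 1), false⟩ else ⟨(e.base.1 - 1, e.base.2), true⟩

/-- A finite set `S` of (dual) lattice edges is a *circuit* if it is the edge set of a
closed self-avoiding path: there are `n ≥ 3` distinct vertices `c 0, …, c (n-1)`,
cyclically consecutive ones being joined by an edge of `S`, and every edge of `S` arising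
this way. -/
def IsCircuit (S : Finset LatticeEdge) : Prop :=
  ∃ n : ℕ, 3 ≤ n ∧ ∃ c : ZMod n → ℤ × ℤ, Function.Injective c ∧
    (∀ i : ZMod n, ∃ e ∈ S, e.ends = s(c i, c (i + 1))) ∧
    (∀ e ∈ S, ∃ i : ZMod n, e.ends = s(c i, c (i + 1)))

/-- The dual edge `e_k*` joining `(k - 1/2, -1/2)` to `(k - 1/2, 1/2)`; in our
identification of the dual lattice with `ℤ²` this is the vertical dual edge with base
`(k-1, -1)`, i.e. the dual of the horizontal edge `(k-1, 0)–(k, 0)`. -/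
def ekStar (k : ℤ) : LatticeEdge := ⟨(k - 1, -1), false⟩

/-- The probability that the edge `e` is open: `p_h` for horizontal edges and `p_v`
for vertical ones. -/
noncomputable def edgeProb (ph pv : ℝ) (e : LatticeEdge) : ℝ := if e.horiz then ph else pv

/-- `P` is the Bernoulli product measure `P_{(p_h, p_v)}` on configurations
`ω ∈ {0,1}^𝔼` (encoded as `LatticeEdge → Bool`, `true` = open): it is a probability
measure and, for every finite set of edges, the states of those edges are independent
Bernoulli variables with the correct parameters.  These cylinder probabilities
characterize the product measure uniquely. -/
def IsBernoulliProduct (ph pv : ℝ) (P : Measure (LatticeEdge → Bool)) : Prop :=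
  IsProbabilityMeasure P ∧
    ∀ (F : Finset LatticeEdge) (σ : LatticeEdge → Bool),
      P {ω | ∀ e ∈ F, ω e = σ e} =
        ∏ e ∈ F, ENNReal.ofReal
          (if σ e then edgeProb ph pv e else 1 - edgeProb ph pv e)

/-- The graph of open edges of the configuration `ω`. -/
def openGraph (ω : LatticeEdge → Bool) : SimpleGraph (ℤ × ℤ) :=
  graphOf {e | ω e = true}

/-- `x` and `y` belong to the same finite open cluster of the configuration `ω`. -/
def SameFiniteCluster (ω : LatticeEdge → Bool) (x y : ℤ × ℤ) : Prop :=
  ∃ C : (openGraph ω).ConnectedComponent, x ∈ C.supp ∧ y ∈ C.supp ∧ C.supp.Finite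

/-- The truncated (finite) connectivity `τ^f_p(x,y)`: the probability that `x` and `y`
belong to the same finite open cluster. -/
noncomputable def tauF (P : Measure (LatticeEdge → Bool)) (x y : ℤ × ℤ) : ℝ :=
  (P {ω | SameFiniteCluster ω x y}).toReal

/-- The box `V_N = ([-N,N] × [-N,N]) ∩ ℤ²`. -/
def VN (N : ℕ) : Set (ℤ × ℤ) := {v | |v.1| ≤ (N : ℤ) ∧ |v.2| ≤ (N : ℤ)}

/-- The interior vertex boundary `∂_v^int V_N = {x ∈ V_N : d(x, ℤ² ∖ V_N) = 1}`. -/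
def intBdry (N : ℕ) : Set (ℤ × ℤ) :=
  {v | (|v.1| ≤ (N : ℤ) ∧ |v.2| ≤ (N : ℤ)) ∧ (|v.1| = (N : ℤ) ∨ |v.2| = (N : ℤ))}

/-- `e ∈ E_N`: both endpoints of `e` lie in `V_N`. -/
def edgeInBox (N : ℕ) (e : LatticeEdge) : Prop := e.fst ∈ VN N ∧ e.snd ∈ VN N

/-- The graph on `(V_N, open edges of E_N)` (vertices outside `V_N` are isolated). -/
def openGraphN (N : ℕ) (ω : LatticeEdge → Bool) : SimpleGraph (ℤ × ℤ) :=
  graphOf {e | edgeInBox N e ∧ ω e = true}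

/-- The finite-volume event defining `τ^{f,N}_p(x,y)`: there is an open cluster `A` of
`(V_N, open edges of E_N)` with `{x,y} ⊆ V_A` and `V_A ∩ ∂_v^int V_N = ∅`. -/
def FiniteVolEvent (N : ℕ) (x y : ℤ × ℤ) (ω : LatticeEdge → Bool) : Prop :=
  ∃ C : (openGraphN N ω).ConnectedComponent,
    x ∈ C.supp ∧ y ∈ C.supp ∧ C.supp ∩ intBdry N = ∅

/-- The finite-volume finite connectivity `τ^{f,N}_p(x,y)`. -/
noncomputable def tauFN (P : Measure (LatticeEdge → Bool)) (N : ℕ) (x y : ℤ × ℤ) : ℝ :=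
  (P {ω | FiniteVolEvent N x y ω}).toReal

/-- `λ = (1-p)/p`. -/
noncomputable def lam (p : ℝ) : ℝ := (1 - p) / p

/-- The threshold `η̃(p_h, x₁, x₂)` from the paper. -/
noncomputable def etaTilde (ph : ℝ) (x1 x2 : ℤ) : ℝ :=
  ((betaX (x1, x2) : ℝ) * ph ^ (4 * (x1 + x2 + 2)) /
      ((4 ^ 3 * lam ph) ^ (x1 + x2 + 3) / (1 - 4 ^ 3 * lam ph) +
        (betaX (x1, x2) : ℝ) * (1 + 12 * lam ph) ^ (2 * (x1 + x2 + 2)))) ^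
    (1 / (2 * ((x2 : ℝ) - (x1 : ℝ))))

namespace TauAux

open SimpleGraph

@[simp] lemma ends_def (e : LatticeEdge) : e.ends = s(e.fst, e.snd) := rfl

@[simp] lemma fst_def (e : LatticeEdge) : e.fst = e.base := rfl

lemma snd_horiz (e : LatticeEdge) (h : e.horiz = true) :
    e.snd = (e.base.1 + 1, e.base.2) := by simp [LatticeEdge.snd, h]

lemma snd_vert (e : LatticeEdge) (h : e.horiz = false) :
    e.snd = (e.base.1, e.base.2 + 1) := by simp [LatticeEdge.snd, h]

lemma horiz_cases (e : LatticeEdge) : e.horiz = true ∨ e.horiz = false := by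
  rcases e.horiz <;> simp

lemma fst_ne_snd (e : LatticeEdge) : e.fst ≠ e.snd := by
  rcases horiz_cases e with h | h
  · rw [fst_def, snd_horiz e h]
    intro hc
    have := congrArg Prod.fst hc
    simp at this
  · rw [fst_def, snd_vert e h]
    intro hc
    have := congrArg Prod.snd hc
    simp at this

lemma ends_eq_iff {e : LatticeEdge} {u v : ℤ × ℤ} :
    e.ends = s(u, v) ↔ (e.fst = u ∧ e.snd = v) ∨ (e.fst = v ∧ e.snd = u) := by
  rw [ends_def, Sym2.eq_iff]

lemma graphOf_adj {T : Set LatticeEdge} {u v : ℤ × ℤ} :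
    (graphOf T).Adj u v ↔ u ≠ v ∧ ∃ e ∈ T, e.ends = s(u, v) := Iff.rfl

/-- possible displacements along an edge of any `graphOf` graph -/
lemma adj_delta {T : Set LatticeEdge} {u v : ℤ × ℤ} (h : (graphOf T).Adj u v) :
    v = (u.1 + 1, u.2) ∨ v = (u.1 - 1, u.2) ∨ v = (u.1, u.2 + 1) ∨ v = (u.1, u.2 - 1) := by
  obtain ⟨-, e, -, hends⟩ := h
  rcases ends_eq_iff.mp hends with ⟨h1, h2⟩ | ⟨h1, h2⟩ <;>
    rcases horiz_cases e with hh | hh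
  · rw [fst_def] at h1; rw [snd_horiz e hh] at h2; subst h1; subst h2
    left; rfl
  · rw [fst_def] at h1; rw [snd_vert e hh] at h2; subst h1; subst h2
    right; right; left; rfl
  · rw [fst_def] at h1; rw [snd_horiz e hh] at h2; subst h1; subst h2
    right; left
    exact Prod.ext (by simp) (by simp)
  · rw [fst_def] at h1; rw [snd_vert e hh] at h2; subst h1; subst h2
    right; right; right
    exact Prod.ext (by simp) (by simp)

lemma adj_delta' {T : Set LatticeEdge} {u v : ℤ × ℤ} (h : (graphOf T).Adj u v) :
    (v.1 = u.1 + 1 ∧ v.2 = u.2) ∨ (v.1 = u.1 - 1 ∧ v.2 = u.2) ∨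
    (v.1 = u.1 ∧ v.2 = u.2 + 1) ∨ (v.1 = u.1 ∧ v.2 = u.2 - 1) := by
  rcases adj_delta h with h | h | h | h <;> subst h <;> simp

/-- walk confinement: if `S` is closed under adjacency, a walk starting in `S`
has all its support in `S`. -/
lemma walk_support_subset {G : SimpleGraph (ℤ × ℤ)} {S : Set (ℤ × ℤ)}
    (hcl : ∀ ⦃a b : ℤ × ℤ⦄, a ∈ S → G.Adj a b → b ∈ S) :
    ∀ {a b : ℤ × ℤ} (w : G.Walk a b), a ∈ S → ∀ y ∈ w.support, y ∈ S := by
  intro a b w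
  induction w with
  | nil =>
      intro ha y hy
      rw [SimpleGraph.Walk.support_nil] at hy
      simp at hy; subst hy; exact ha
  | @cons a c b hadj p ih =>
      intro ha y hy
      rw [SimpleGraph.Walk.support_cons] at hy
      rcases List.mem_cons.mp hy with rfl | hy
      · exact ha
      · exact ih (hcl ha hadj) y hy

lemma reachable_mem {G : SimpleGraph (ℤ × ℤ)} {S : Set (ℤ × ℤ)}
    (hcl : ∀ ⦃a b : ℤ × ℤ⦄, a ∈ S → G.Adj a b → b ∈ S)
    {a b : ℤ × ℤ} (ha : a ∈ S) (h : G.Reachable a b) : b ∈ S := by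
  obtain ⟨w⟩ := h
  exact walk_support_subset hcl w ha b w.end_mem_support

/-- intermediate value for the first coordinate along a walk -/
lemma walk_IV1 {T : Set LatticeEdge} {S : Set (ℤ × ℤ)} :
    ∀ {a b : ℤ × ℤ} (w : (graphOf T).Walk a b), (∀ y ∈ w.support, y ∈ S) →
      ∀ c : ℤ, a.1 ≤ c → c ≤ b.1 → ∃ v ∈ S, v.1 = c := by
  intro a b w
  induction w with
  | nil =>
      rename_i u
      intro hs c h1 h2
      exact ⟨u, hs u (by simp), by omega⟩
  | @cons a d b hadj p ih =>
      intro hs c h1 h2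
      have hsupp : ∀ y ∈ p.support, y ∈ S :=
        fun y hy => hs y (by rw [SimpleGraph.Walk.support_cons]; exact List.mem_cons_of_mem _ hy)
      rcases eq_or_lt_of_le h1 with rfl | hlt
      · exact ⟨a, hs a (by simp), rfl⟩
      · have hd : d.1 ≤ c := by rcases adj_delta' hadj with h|h|h|h <;> omega
        exact ih hsupp c hd h2

/-- intermediate value for the second coordinate along a walk -/
lemma walk_IV2 {T : Set LatticeEdge} {S : Set (ℤ × ℤ)} :
    ∀ {a b : ℤ × ℤ} (w : (graphOf T).Walk a b), (∀ y ∈ w.support, y ∈ S) →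
      ∀ c : ℤ, a.2 ≤ c → c ≤ b.2 → ∃ v ∈ S, v.2 = c := by
  intro a b w
  induction w with
  | nil =>
      rename_i u
      intro hs c h1 h2
      exact ⟨u, hs u (by simp), by omega⟩
  | @cons a d b hadj p ih =>
      intro hs c h1 h2
      have hsupp : ∀ y ∈ p.support, y ∈ S :=
        fun y hy => hs y (by rw [SimpleGraph.Walk.support_cons]; exact List.mem_cons_of_mem _ hy)
      rcases eq_or_lt_of_le h1 with rfl | hlt
      · exact ⟨a, hs a (by simp), rfl⟩
      · have hd : d.2 ≤ c := by rcases adj_delta' hadj with h|h|h|h <;> omega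
        exact ih hsupp c hd h2

/-- crossing pair, first coordinate -/
lemma walk_cross1 {T : Set LatticeEdge} {S : Set (ℤ × ℤ)} :
    ∀ {a b : ℤ × ℤ} (w : (graphOf T).Walk a b), (∀ y ∈ w.support, y ∈ S) →
      ∀ c : ℤ, a.1 ≤ c → c + 1 ≤ b.1 → ∃ r : ℤ, (c, r) ∈ S ∧ (c + 1, r) ∈ S := by
  intro a b w
  induction w with
  | nil =>
      intro _ c h1 h2; omega
  | @cons a d b hadj p ih =>
      intro hs c h1 h2
      have hsupp : ∀ y ∈ p.support, y ∈ S :=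
        fun y hy => hs y (by rw [SimpleGraph.Walk.support_cons]; exact List.mem_cons_of_mem _ hy)
      by_cases hd : d.1 ≤ c
      · exact ih hsupp c hd h2
      · rcases adj_delta' hadj with h|h|h|h
        · have hac : a.1 = c := by omega
          have hA : ((c, a.2) : ℤ × ℤ) = a := Prod.ext (by simp [hac]) rfl
          have hD : ((c + 1, a.2) : ℤ × ℤ) = d := Prod.ext (by simp [h.1, hac]) (by simp [h.2])
          refine ⟨a.2, ?_, ?_⟩
          · rw [hA]; exact hs a (by simp)
          · rw [hD]
            exact hs d (by rw [SimpleGraph.Walk.support_cons];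
                           exact List.mem_cons_of_mem _ p.start_mem_support)
        all_goals omega

/-- crossing pair, second coordinate -/
lemma walk_cross2 {T : Set LatticeEdge} {S : Set (ℤ × ℤ)} :
    ∀ {a b : ℤ × ℤ} (w : (graphOf T).Walk a b), (∀ y ∈ w.support, y ∈ S) →
      ∀ c : ℤ, a.2 ≤ c → c + 1 ≤ b.2 → ∃ r : ℤ, (r, c) ∈ S ∧ (r, c + 1) ∈ S := by
  intro a b w
  induction w with
  | nil =>
      intro _ c h1 h2; omega
  | @cons a d b hadj p ih =>
      intro hs c h1 h2
      have hsupp : ∀ y ∈ p.support, y ∈ S :=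
        fun y hy => hs y (by rw [SimpleGraph.Walk.support_cons]; exact List.mem_cons_of_mem _ hy)
      by_cases hd : d.2 ≤ c
      · exact ih hsupp c hd h2
      · rcases adj_delta' hadj with h|h|h|h
        · omega
        · omega
        · have hac : a.2 = c := by omega
          have hA : ((a.1, c) : ℤ × ℤ) = a := Prod.ext rfl (by simp [hac])
          have hD : ((a.1, c + 1) : ℤ × ℤ) = d := Prod.ext (by simp [h.1]) (by simp [h.2, hac])
          refine ⟨a.1, ?_, ?_⟩
          · rw [hA]; exact hs a (by simp)
          · rw [hD]
            exact hs d (by rw [SimpleGraph.Walk.support_cons];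
                           exact List.mem_cons_of_mem _ p.start_mem_support)
        · omega

end TauAux

namespace TauAux

open SimpleGraph

variable {x1 x2 : ℤ}

/-- A staircase profile: the data describing a minimal contour's interior. -/
structure Prof (x1 x2 : ℤ) where
  l : ℤ → ℤ
  u : ℤ → ℤ
  hl0 : l 0 = 0
  hux : u x1 = x2
  hlu : ∀ c, 0 ≤ c → c ≤ x1 → l c ≤ u c
  hlmono : ∀ c, 0 ≤ c → c + 1 ≤ x1 → l c ≤ l (c + 1)
  humono : ∀ c, 0 ≤ c → c + 1 ≤ x1 → u c ≤ u (c + 1)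
  hover : ∀ c, 0 ≤ c → c + 1 ≤ x1 → l (c + 1) ≤ u c

namespace Prof

lemma l_mono (p : Prof x1 x2) {c1 c2 : ℤ} (h0 : 0 ≤ c1) (h12 : c1 ≤ c2) (h2 : c2 ≤ x1) :
    p.l c1 ≤ p.l c2 := by
  have H := Int.le_induction (m := c1) (motive := fun n _ => n ≤ x1 → p.l c1 ≤ p.l n)
    (fun _ => le_rfl)
    (fun n hn ih h2 => le_trans (ih (by omega)) (p.hlmono n (by omega) h2))
  exact H c2 h12 h2

lemma u_mono (p : Prof x1 x2) {c1 c2 : ℤ} (h0 : 0 ≤ c1) (h12 : c1 ≤ c2) (h2 : c2 ≤ x1) :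
    p.u c1 ≤ p.u c2 := by
  have H := Int.le_induction (m := c1) (motive := fun n _ => n ≤ x1 → p.u c1 ≤ p.u n)
    (fun _ => le_rfl)
    (fun n hn ih h2 => le_trans (ih (by omega)) (p.humono n (by omega) h2))
  exact H c2 h12 h2

lemma l_nonneg (p : Prof x1 x2) {c : ℤ} (h0 : 0 ≤ c) (h1 : c ≤ x1) : 0 ≤ p.l c :=
  le_trans (le_of_eq p.hl0.symm) (p.l_mono le_rfl h0 h1)

lemma u_le (p : Prof x1 x2) {c : ℤ} (h0 : 0 ≤ c) (h1 : c ≤ x1) : p.u c ≤ x2 :=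
  le_trans (p.u_mono h0 h1 le_rfl) (le_of_eq p.hux)

lemma l_le (p : Prof x1 x2) {c : ℤ} (h0 : 0 ≤ c) (h1 : c ≤ x1) : p.l c ≤ x2 :=
  le_trans (p.hlu c h0 h1) (p.u_le h0 h1)

lemma u_nonneg (p : Prof x1 x2) {c : ℤ} (h0 : 0 ≤ c) (h1 : c ≤ x1) : 0 ≤ p.u c :=
  le_trans (p.l_nonneg h0 h1) (p.hlu c h0 h1)

end Prof

/-- the interior region described by a profile -/
def profSet (p : Prof x1 x2) : Set (ℤ × ℤ) :=
  {v | 0 ≤ v.1 ∧ v.1 ≤ x1 ∧ p.l v.1 ≤ v.2 ∧ v.2 ≤ p.u v.1}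

def Lnext (p : Prof x1 x2) (c : ℤ) : ℤ := if c = x1 then x2 else p.l (c + 1)
def Uprev (p : Prof x1 x2) (c : ℤ) : ℤ := if c = 0 then 0 else p.u (c - 1)

lemma Lnext_ge (p : Prof x1 x2) {c : ℤ} (h0 : 0 ≤ c) (h1 : c ≤ x1) : p.l c ≤ Lnext p c := by
  unfold Lnext
  split
  · subst ‹c = x1›; exact p.l_le h0 h1
  · exact p.hlmono c h0 (by omega)

lemma Lnext_le (p : Prof x1 x2) {c : ℤ} (h0 : 0 ≤ c) (h1 : c ≤ x1) : Lnext p c ≤ p.u c := by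
  unfold Lnext
  split
  · subst ‹c = x1›; exact le_of_eq p.hux.symm
  · exact p.hover c h0 (by omega)

lemma Uprev_ge (p : Prof x1 x2) {c : ℤ} (h0 : 0 ≤ c) (h1 : c ≤ x1) : p.l c ≤ Uprev p c := by
  unfold Uprev
  split
  · subst ‹c = 0›; exact le_of_eq p.hl0
  · have : p.l c ≤ p.u (c - 1) := by
      have := p.hover (c - 1) (by omega) (by omega)
      simpa using this
    exact this

lemma Uprev_le (p : Prof x1 x2) {c : ℤ} (h0 : 0 ≤ c) (h1 : c ≤ x1) : Uprev p c ≤ p.u c := by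
  unfold Uprev
  split
  · subst ‹c = 0›; exact p.u_nonneg le_rfl h1
  · exact p.u_mono (by omega) (by omega) h1

/-- vertical edges of the lower staircase path -/
noncomputable def pathLv (p : Prof x1 x2) : Finset LatticeEdge :=
  (Finset.Icc 0 x1).biUnion fun c =>
    (Finset.Ico (p.l c) (Lnext p c)).image fun r => ⟨(c, r), false⟩

/-- horizontal edges of the lower staircase path -/
noncomputable def pathLh (p : Prof x1 x2) : Finset LatticeEdge :=
  (Finset.Ico 0 x1).image fun c => ⟨(c, p.l (c + 1)), true⟩

noncomputable def pathUv (p : Prof x1 x2) : Finset LatticeEdge :=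
  (Finset.Icc 0 x1).biUnion fun c =>
    (Finset.Ico (Uprev p c) (p.u c)).image fun r => ⟨(c, r), false⟩

noncomputable def pathUh (p : Prof x1 x2) : Finset LatticeEdge :=
  (Finset.Ico 0 x1).image fun c => ⟨(c, p.u c), true⟩

noncomputable def pathE (p : Prof x1 x2) : Finset LatticeEdge :=
  pathLv p ∪ pathLh p ∪ pathUv p ∪ pathUh p

/-- every path edge has both of its endpoints in the profile region -/
lemma pathE_internal (p : Prof x1 x2) {e : LatticeEdge} (he : e ∈ pathE p) :
    e.fst ∈ profSet p ∧ e.snd ∈ profSet p := by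
  have hmem : e ∈ pathLv p ∨ e ∈ pathLh p ∨ e ∈ pathUv p ∨ e ∈ pathUh p := by
    unfold pathE at he
    simp only [Finset.mem_union] at he
    tauto
  rcases hmem with h | h | h | h
  · simp only [pathLv, Finset.mem_biUnion, Finset.mem_image, Finset.mem_Icc,
      Finset.mem_Ico] at h
    obtain ⟨c, ⟨hc0, hc1⟩, r, ⟨hr1, hr2⟩, rfl⟩ := h
    have h2 : Lnext p c ≤ p.u c := Lnext_le p hc0 hc1
    constructor
    · show 0 ≤ c ∧ c ≤ x1 ∧ p.l c ≤ r ∧ r ≤ p.u c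
      exact ⟨hc0, hc1, hr1, by omega⟩
    · rw [snd_vert _ rfl]
      show 0 ≤ c ∧ c ≤ x1 ∧ p.l c ≤ r + 1 ∧ r + 1 ≤ p.u c
      exact ⟨hc0, hc1, by omega, by omega⟩
  · simp only [pathLh, Finset.mem_image, Finset.mem_Ico] at h
    obtain ⟨c, ⟨hc0, hc1⟩, rfl⟩ := h
    have h1 : p.l c ≤ p.l (c + 1) := p.hlmono c hc0 (by omega)
    have h2 : p.l (c + 1) ≤ p.u c := p.hover c hc0 (by omega)
    have h3 : p.l (c + 1) ≤ p.u (c + 1) := p.hlu (c + 1) (by omega) (by omega)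
    constructor
    · show 0 ≤ c ∧ c ≤ x1 ∧ p.l c ≤ p.l (c + 1) ∧ p.l (c + 1) ≤ p.u c
      exact ⟨hc0, by omega, h1, h2⟩
    · rw [snd_horiz _ rfl]
      show 0 ≤ c + 1 ∧ c + 1 ≤ x1 ∧ p.l (c + 1) ≤ p.l (c + 1) ∧ p.l (c + 1) ≤ p.u (c + 1)
      exact ⟨by omega, by omega, le_rfl, h3⟩
  · simp only [pathUv, Finset.mem_biUnion, Finset.mem_image, Finset.mem_Icc,
      Finset.mem_Ico] at h
    obtain ⟨c, ⟨hc0, hc1⟩, r, ⟨hr1, hr2⟩, rfl⟩ := h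
    have h2 : p.l c ≤ Uprev p c := Uprev_ge p hc0 hc1
    constructor
    · show 0 ≤ c ∧ c ≤ x1 ∧ p.l c ≤ r ∧ r ≤ p.u c
      exact ⟨hc0, hc1, by omega, by omega⟩
    · rw [snd_vert _ rfl]
      show 0 ≤ c ∧ c ≤ x1 ∧ p.l c ≤ r + 1 ∧ r + 1 ≤ p.u c
      exact ⟨hc0, hc1, by omega, by omega⟩
  · simp only [pathUh, Finset.mem_image, Finset.mem_Ico] at h
    obtain ⟨c, ⟨hc0, hc1⟩, rfl⟩ := h
    have h1 : p.l c ≤ p.u c := p.hlu c hc0 (by omega)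
    have h2 : p.l (c + 1) ≤ p.u c := p.hover c hc0 (by omega)
    have h3 : p.u c ≤ p.u (c + 1) := p.humono c hc0 (by omega)
    constructor
    · show 0 ≤ c ∧ c ≤ x1 ∧ p.l c ≤ p.u c ∧ p.u c ≤ p.u c
      exact ⟨hc0, by omega, h1, le_rfl⟩
    · rw [snd_horiz _ rfl]
      show 0 ≤ c + 1 ∧ c + 1 ≤ x1 ∧ p.l (c + 1) ≤ p.u c ∧ p.u c ≤ p.u (c + 1)
      exact ⟨by omega, by omega, h2, h3⟩

end TauAux

namespace TauAux

open SimpleGraph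

variable {x1 x2 : ℤ}

lemma mem_pathLv {p : Prof x1 x2} {e : LatticeEdge} :
    e ∈ pathLv p ↔ ∃ c r, (0 ≤ c ∧ c ≤ x1) ∧ (p.l c ≤ r ∧ r < Lnext p c) ∧
      e = ⟨(c, r), false⟩ := by
  simp only [pathLv, Finset.mem_biUnion, Finset.mem_image, Finset.mem_Icc, Finset.mem_Ico]
  constructor
  · rintro ⟨c, hc, r, hr, rfl⟩; exact ⟨c, r, hc, hr, rfl⟩
  · rintro ⟨c, r, hc, hr, rfl⟩; exact ⟨c, hc, r, hr, rfl⟩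

lemma mem_pathUv {p : Prof x1 x2} {e : LatticeEdge} :
    e ∈ pathUv p ↔ ∃ c r, (0 ≤ c ∧ c ≤ x1) ∧ (Uprev p c ≤ r ∧ r < p.u c) ∧
      e = ⟨(c, r), false⟩ := by
  simp only [pathUv, Finset.mem_biUnion, Finset.mem_image, Finset.mem_Icc, Finset.mem_Ico]
  constructor
  · rintro ⟨c, hc, r, hr, rfl⟩; exact ⟨c, r, hc, hr, rfl⟩
  · rintro ⟨c, r, hc, hr, rfl⟩; exact ⟨c, hc, r, hr, rfl⟩

lemma card_pathLv (p : Prof x1 x2) : (pathLv p).card ≤ x2.toNat := by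
  have h := Finset.card_le_card_of_injOn (f := fun e => e.base.2)
      (s := pathLv p) (t := Finset.Ico 0 x2) ?_ ?_
  · simpa using h
  · intro e he
    obtain ⟨c, r, ⟨hc0, hc1⟩, ⟨hr1, hr2⟩, rfl⟩ := mem_pathLv.mp he
    have h2 : Lnext p c ≤ p.u c := Lnext_le p hc0 hc1
    have h3 : p.u c ≤ x2 := p.u_le hc0 hc1
    have h4 : 0 ≤ p.l c := p.l_nonneg hc0 hc1
    simp only [Finset.coe_Ico, Set.mem_Ico]
    show 0 ≤ r ∧ r < x2
    omega
  · intro e he e' he' hee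
    obtain ⟨c, r, ⟨hc0, hc1⟩, ⟨hr1, hr2⟩, rfl⟩ := mem_pathLv.mp he
    obtain ⟨c', r', ⟨hc0', hc1'⟩, ⟨hr1', hr2'⟩, rfl⟩ := mem_pathLv.mp he'
    have hrr : r = r' := by simpa using hee
    subst hrr
    have key : ∀ a b : ℤ, 0 ≤ a → a < b → b ≤ x1 → p.l b ≤ r → r < Lnext p a → False := by
      intro a b ha hab hb hlb hup
      have h5 : Lnext p a = p.l (a + 1) := if_neg (by omega)
      have h6 : p.l (a + 1) ≤ p.l b := p.l_mono (by omega) (by omega) hb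
      omega
    rcases lt_trichotomy c c' with h | h | h
    · exact absurd (key c c' hc0 h hc1' hr1' hr2) (by simp)
    · subst h; rfl
    · exact absurd (key c' c hc0' h hc1 hr1 hr2') (by simp)

lemma card_pathUv (p : Prof x1 x2) : (pathUv p).card ≤ x2.toNat := by
  have h := Finset.card_le_card_of_injOn (f := fun e => e.base.2)
      (s := pathUv p) (t := Finset.Ico 0 x2) ?_ ?_
  · simpa using h
  · intro e he
    obtain ⟨c, r, ⟨hc0, hc1⟩, ⟨hr1, hr2⟩, rfl⟩ := mem_pathUv.mp he
    have h2 : p.l c ≤ Uprev p c := Uprev_ge p hc0 hc1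
    have h3 : p.u c ≤ x2 := p.u_le hc0 hc1
    have h4 : 0 ≤ p.l c := p.l_nonneg hc0 hc1
    simp only [Finset.coe_Ico, Set.mem_Ico]
    show 0 ≤ r ∧ r < x2
    omega
  · intro e he e' he' hee
    obtain ⟨c, r, ⟨hc0, hc1⟩, ⟨hr1, hr2⟩, rfl⟩ := mem_pathUv.mp he
    obtain ⟨c', r', ⟨hc0', hc1'⟩, ⟨hr1', hr2'⟩, rfl⟩ := mem_pathUv.mp he'
    have hrr : r = r' := by simpa using hee
    subst hrr
    have key : ∀ a b : ℤ, 0 ≤ a → a < b → b ≤ x1 → Uprev p b ≤ r → r < p.u a → False := by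
      intro a b ha hab hb hlb hup
      have h5 : Uprev p b = p.u (b - 1) := if_neg (by omega)
      have h6 : p.u a ≤ p.u (b - 1) := p.u_mono (by omega) (by omega) (by omega)
      omega
    rcases lt_trichotomy c c' with h | h | h
    · exact absurd (key c c' hc0 h hc1' hr1' hr2) (by simp)
    · subst h; rfl
    · exact absurd (key c' c hc0' h hc1 hr1 hr2') (by simp)

lemma card_pathLh (p : Prof x1 x2) : (pathLh p).card ≤ x1.toNat := by
  refine Finset.card_image_le.trans ?_
  rw [Int.card_Ico]
  simp

lemma card_pathUh (p : Prof x1 x2) : (pathUh p).card ≤ x1.toNat := by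
  refine Finset.card_image_le.trans ?_
  rw [Int.card_Ico]
  simp

lemma card_pathE (p : Prof x1 x2) :
    (pathE p).card ≤ 2 * (x1.toNat + x2.toNat) := by
  unfold pathE
  have h1 := Finset.card_union_le (pathLv p ∪ pathLh p ∪ pathUv p) (pathUh p)
  have h2 := Finset.card_union_le (pathLv p ∪ pathLh p) (pathUv p)
  have h3 := Finset.card_union_le (pathLv p) (pathLh p)
  have := card_pathLv p
  have := card_pathUv p
  have := card_pathLh p
  have := card_pathUh p
  omega

/-- climbing a column of open vertical edges -/
lemma reach_segment {ω : LatticeEdge → Bool} {c r1 r2 : ℤ} (h12 : r1 ≤ r2)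
    (hopen : ∀ r, r1 ≤ r → r < r2 → ω (⟨(c, r), false⟩ : LatticeEdge) = true) :
    (openGraph ω).Reachable (c, r1) (c, r2) := by
  have H := Int.le_induction (m := r1)
    (motive := fun n _ => (∀ r, r1 ≤ r → r < n → ω (⟨(c, r), false⟩ : LatticeEdge) = true) →
      (openGraph ω).Reachable (c, r1) (c, n))
    (fun _ => Reachable.refl _)
    (fun n hn ih hop => by
      refine (ih (fun r h1 h2 => hop r h1 (by omega))).trans (Adj.reachable ?_)
      refine ⟨?_, ⟨(c, n), false⟩, hop n hn (by omega), ?_⟩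
      · simp only [ne_eq, Prod.mk.injEq]
        omega
      · rw [ends_def, snd_vert _ rfl]
        simp)
  exact H r2 h12 hopen

lemma open_horiz_adj {ω : LatticeEdge → Bool} {c r : ℤ}
    (h : ω (⟨(c, r), true⟩ : LatticeEdge) = true) :
    (openGraph ω).Adj (c, r) (c + 1, r) := by
  refine ⟨?_, ⟨(c, r), true⟩, h, ?_⟩
  · simp only [ne_eq, Prod.mk.injEq]
    omega
  · rw [ends_def, snd_horiz _ rfl]
    simp

/-- all vertices of the lower path are reachable from the origin -/
lemma reach_L (p : Prof x1 x2) (hx1 : 0 ≤ x1) {ω : LatticeEdge → Bool}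
    (hopen : ∀ e ∈ pathE p, ω e = true) :
    ∀ c, 0 ≤ c → c ≤ x1 → ∀ r, p.l c ≤ r → r ≤ Lnext p c →
      (openGraph ω).Reachable (0, 0) (c, r) := by
  have hLv : ∀ c r, 0 ≤ c → c ≤ x1 → p.l c ≤ r → r < Lnext p c →
      ω (⟨(c, r), false⟩ : LatticeEdge) = true := by
    intro c r h0 h1 h2 h3
    refine hopen _ ?_
    unfold pathE
    refine Finset.mem_union_left _ (Finset.mem_union_left _ (Finset.mem_union_left _ ?_))
    exact mem_pathLv.mpr ⟨c, r, ⟨h0, h1⟩, ⟨h2, h3⟩, rfl⟩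
  have hLh : ∀ c, 0 ≤ c → c + 1 ≤ x1 → ω (⟨(c, p.l (c + 1)), true⟩ : LatticeEdge) = true := by
    intro c h0 h1
    refine hopen _ ?_
    unfold pathE
    refine Finset.mem_union_left _ (Finset.mem_union_left _ (Finset.mem_union_right _ ?_))
    exact Finset.mem_image.mpr ⟨c, Finset.mem_Ico.mpr ⟨h0, by omega⟩, rfl⟩
  have base : ∀ c, 0 ≤ c → c ≤ x1 → (openGraph ω).Reachable (0, 0) (c, p.l c) := by
    intro c h0
    have H := Int.le_induction (m := (0 : ℤ))
      (motive := fun n _ => n ≤ x1 → (openGraph ω).Reachable (0, 0) (n, p.l n))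
      (fun _ => by
        have h : ((0 : ℤ), p.l 0) = ((0 : ℤ), (0 : ℤ)) := by rw [p.hl0]
        rw [h])
      (fun n hn ih h1 => by
        have hLn : Lnext p n = p.l (n + 1) := if_neg (by omega)
        have R1 := ih (by omega)
        have R2 : (openGraph ω).Reachable (n, p.l n) (n, p.l (n + 1)) := by
          refine reach_segment (p.hlmono n hn h1) ?_
          intro r hr1 hr2
          exact hLv n r hn (by omega) hr1 (by omega)
        have R3 := (open_horiz_adj (hLh n hn h1)).reachable
        exact (R1.trans R2).trans R3)
    exact H c h0
  intro c h0 h1 r hr1 hr2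
  refine (base c h0 h1).trans (reach_segment hr1 ?_)
  intro r' h1' h2'
  exact hLv c r' h0 h1 h1' (by omega)

/-- all vertices of the upper path are reachable from the origin -/
lemma reach_U (p : Prof x1 x2) (hx1 : 0 ≤ x1) {ω : LatticeEdge → Bool}
    (hopen : ∀ e ∈ pathE p, ω e = true) :
    ∀ c, 0 ≤ c → c ≤ x1 → ∀ r, Uprev p c ≤ r → r ≤ p.u c →
      (openGraph ω).Reachable (0, 0) (c, r) := by
  have hUv : ∀ c r, 0 ≤ c → c ≤ x1 → Uprev p c ≤ r → r < p.u c →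
      ω (⟨(c, r), false⟩ : LatticeEdge) = true := by
    intro c r h0 h1 h2 h3
    refine hopen _ ?_
    unfold pathE
    refine Finset.mem_union_left _ (Finset.mem_union_right _ ?_)
    exact mem_pathUv.mpr ⟨c, r, ⟨h0, h1⟩, ⟨h2, h3⟩, rfl⟩
  have hUh : ∀ c, 0 ≤ c → c + 1 ≤ x1 → ω (⟨(c, p.u c), true⟩ : LatticeEdge) = true := by
    intro c h0 h1
    refine hopen _ ?_
    unfold pathE
    refine Finset.mem_union_right _ ?_
    exact Finset.mem_image.mpr ⟨c, Finset.mem_Ico.mpr ⟨h0, by omega⟩, rfl⟩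
  have base : ∀ c, 0 ≤ c → c ≤ x1 → (openGraph ω).Reachable (0, 0) (c, p.u c) := by
    intro c h0
    have H := Int.le_induction (m := (0 : ℤ))
      (motive := fun n _ => n ≤ x1 → (openGraph ω).Reachable (0, 0) (n, p.u n))
      (fun h1 => by
        have hU0 : Uprev p 0 = 0 := if_pos rfl
        refine reach_segment (p.u_nonneg le_rfl h1) ?_
        intro r hr1 hr2
        exact hUv 0 r le_rfl h1 (by omega) hr2)
      (fun n hn ih h1 => by
        have hUn : Uprev p (n + 1) = p.u n := by
          rw [Uprev, if_neg (by omega)]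
          simp
        have R1 := ih (by omega)
        have R2 := (open_horiz_adj (hUh n hn h1)).reachable
        have R3 : (openGraph ω).Reachable (n + 1, p.u n) (n + 1, p.u (n + 1)) := by
          refine reach_segment (p.humono n hn h1) ?_
          intro r hr1 hr2
          exact hUv (n + 1) r (by omega) h1 (by omega) hr2
        exact (R1.trans R2).trans R3)
    exact H c h0
  intro c h0 h1 r hr1 hr2
  refine (base c h0 h1).trans (reach_segment hr2 ?_).symm
  intro r' h1' h2'
  exact hUv c r' h0 h1 (by omega) h2'

end TauAux

namespace TauAux

def colF (SF : Finset (ℤ × ℤ)) (c : ℤ) : Finset ℤ :=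
  (SF.filter (fun v => v.1 = c)).image Prod.snd

def rowF (SF : Finset (ℤ × ℤ)) (r : ℤ) : Finset ℤ :=
  (SF.filter (fun v => v.2 = r)).image Prod.fst

lemma mem_colF {SF : Finset (ℤ × ℤ)} {c r : ℤ} : r ∈ colF SF c ↔ (c, r) ∈ SF := by
  simp only [colF, Finset.mem_image, Finset.mem_filter]
  constructor
  · rintro ⟨v, ⟨hv, h1⟩, h2⟩
    have : v = (c, r) := Prod.ext h1 h2
    rwa [this] at hv
  · intro h; exact ⟨(c, r), ⟨h, rfl⟩, rfl⟩

lemma mem_rowF {SF : Finset (ℤ × ℤ)} {c r : ℤ} : c ∈ rowF SF r ↔ (c, r) ∈ SF := by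
  simp only [rowF, Finset.mem_image, Finset.mem_filter]
  constructor
  · rintro ⟨v, ⟨hv, h1⟩, h2⟩
    have : v = (c, r) := Prod.ext h2 h1
    rwa [this] at hv
  · intro h; exact ⟨(c, r), ⟨h, rfl⟩, rfl⟩

/-- auxiliary: monotonicity of the column minima -/
lemma lmono_aux {S : Set (ℤ × ℤ)}
    (h0S : ((0 : ℤ), (0 : ℤ)) ∈ S)
    (hrowIv : ∀ r a b t : ℤ, (a, r) ∈ S → (b, r) ∈ S → a ≤ t → t ≤ b → (t, r) ∈ S)
    (hcross : ∀ v ∈ S, ∀ rr : ℤ, 0 ≤ rr → rr + 1 ≤ v.2 →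
      ∃ cstar : ℤ, (cstar, rr) ∈ S ∧ (cstar, rr + 1) ∈ S)
    {c lc lc1 : ℤ} (hc0 : 0 ≤ c)
    (hlcmin : ∀ r, (c, r) ∈ S → lc ≤ r)
    (hlc1mem : (c + 1, lc1) ∈ S)
    (hlc1nonneg : 0 ≤ lc1)
    (hbad : lc1 < lc) : False := by
  have H : ∀ k : ℕ, (k : ℤ) ≤ lc1 →
      (∃ cc, c + 1 ≤ cc ∧ (cc, lc1 - k) ∈ S) ∧
      (∀ c'', c'' ≤ c → (c'', lc1 - k) ∉ S) := by
    intro k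
    induction k with
    | zero =>
        intro _
        refine ⟨⟨c + 1, le_rfl, by simpa using hlc1mem⟩, ?_⟩
        intro c'' hc'' hmem
        have hcmem : (c, lc1 - (0 : ℕ)) ∈ S :=
          hrowIv _ c'' (c + 1) c hmem (by simpa using hlc1mem) hc'' (by omega)
        have := hlcmin _ hcmem
        simp at this
        omega
    | succ k ih =>
        intro hk1
        obtain ⟨⟨cc, hcc, hmem⟩, hnone⟩ := ih (by push_cast at hk1 ⊢; omega)
        set rr : ℤ := lc1 - (k + 1 : ℕ) with hrr
        have hrr' : rr + 1 = lc1 - k := by push_cast [hrr]; ring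
        obtain ⟨cstar, hc1', hc2'⟩ := hcross (cc, lc1 - k) hmem rr
          (by push_cast [hrr] at *; omega) (by simp [hrr'])
        rw [hrr'] at hc2'
        have hcs : c + 1 ≤ cstar := by
          by_contra hlt
          exact hnone cstar (by omega) hc2'
        refine ⟨⟨cstar, hcs, hc1'⟩, ?_⟩
        intro c'' hc'' hmem'
        have hcmem : (c, rr) ∈ S := hrowIv _ c'' cstar c hmem' hc1' hc'' (by omega)
        have := hlcmin _ hcmem
        push_cast [hrr] at this
        omega
  have hfin := H lc1.toNat (by omega)
  have h0 : lc1 - (lc1.toNat : ℤ) = 0 := by omega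
  rw [h0] at hfin
  exact hfin.2 0 hc0 h0S

/-- auxiliary: monotonicity of the column maxima -/
lemma umono_aux {S : Set (ℤ × ℤ)} {x1 x2 : ℤ}
    (hxS : (x1, x2) ∈ S)
    (hrowIv : ∀ r a b t : ℤ, (a, r) ∈ S → (b, r) ∈ S → a ≤ t → t ≤ b → (t, r) ∈ S)
    (hcross : ∀ v ∈ S, ∀ rr : ℤ, v.2 ≤ rr → rr + 1 ≤ x2 →
      ∃ cstar : ℤ, (cstar, rr) ∈ S ∧ (cstar, rr + 1) ∈ S)
    {c uc uc1 : ℤ} (hc1 : c + 1 ≤ x1)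
    (huc1max : ∀ r, (c + 1, r) ∈ S → r ≤ uc1)
    (hucmem : (c, uc) ∈ S)
    (hucle : uc ≤ x2)
    (hbad : uc1 < uc) : False := by
  have H : ∀ k : ℕ, (k : ℤ) ≤ x2 - uc →
      (∃ cc, cc ≤ c ∧ (cc, uc + k) ∈ S) ∧
      (∀ c'', c + 1 ≤ c'' → (c'', uc + k) ∉ S) := by
    intro k
    induction k with
    | zero =>
        intro _
        refine ⟨⟨c, le_rfl, by simpa using hucmem⟩, ?_⟩
        intro c'' hc'' hmem
        have hcmem : (c + 1, uc + (0 : ℕ)) ∈ S :=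
          hrowIv _ c c'' (c + 1) (by simpa using hucmem) hmem (by omega) hc''
        have := huc1max _ hcmem
        simp at this
        omega
    | succ k ih =>
        intro hk1
        obtain ⟨⟨cc, hcc, hmem⟩, hnone⟩ := ih (by push_cast at hk1 ⊢; omega)
        obtain ⟨cstar, hc1', hc2'⟩ := hcross (cc, uc + k) hmem (uc + k)
          le_rfl (by push_cast at hk1 ⊢; omega)
        have hcs : cstar ≤ c := by
          by_contra hlt
          exact hnone cstar (by omega) hc1'
        have hcast : uc + ((k + 1 : ℕ) : ℤ) = uc + k + 1 := by push_cast; ring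
        refine ⟨⟨cstar, hcs, by rw [hcast]; exact hc2'⟩, ?_⟩
        intro c'' hc'' hmem'
        rw [hcast] at hmem'
        have hcmem : (c + 1, uc + k + 1) ∈ S :=
          hrowIv _ cstar c'' (c + 1) hc2' hmem' (by omega) hc''
        have := huc1max _ hcmem
        omega
  have hfin := H (x2 - uc).toNat (by omega)
  have h0 : uc + ((x2 - uc).toNat : ℤ) = x2 := by omega
  rw [h0] at hfin
  exact hfin.2 x1 hc1 hxS


lemma three_le_card {α : Type*} [DecidableEq α] {s : Finset α} {a b c : α}
    (ha : a ∈ s) (hb : b ∈ s) (hc : c ∈ s) (hab : a ≠ b) (hac : a ≠ c) (hbc : b ≠ c) :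
    3 ≤ s.card := by
  have hsub : ({a, b, c} : Finset α) ⊆ s := by
    intro x hx
    simp only [Finset.mem_insert, Finset.mem_singleton] at hx
    rcases hx with rfl | rfl | rfl <;> assumption
  have h3 : ({a, b, c} : Finset α).card = 3 := by
    rw [Finset.card_insert_of_notMem (by simp [hab, hac]),
      Finset.card_insert_of_notMem (by simp [hbc]), Finset.card_singleton]
  calc 3 = _ := h3.symm
  _ ≤ _ := Finset.card_le_card hsub

end TauAux

namespace TauAux

open SimpleGraph

lemma supp_closed {G : SimpleGraph (ℤ × ℤ)} {C : G.ConnectedComponent} {u v : ℤ × ℤ}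
    (hu : u ∈ C.supp) (h : G.Adj u v) : v ∈ C.supp := by
  rw [SimpleGraph.ConnectedComponent.mem_supp_iff] at hu ⊢
  rw [← hu]
  exact SimpleGraph.ConnectedComponent.sound h.symm.reachable

lemma boundary_char {γ : Finset LatticeEdge} (hcont : IsContour γ)
    {C : (complGraph γ).ConnectedComponent} (hCfin : C.supp.Finite) :
    ∀ e : LatticeEdge, e ∈ γ ↔ Xor' (e.fst ∈ C.supp) (e.snd ∈ C.supp) := by
  obtain ⟨-, hmin⟩ := hcont
  have hnotin : ∀ e : LatticeEdge, e ∉ γ → (e.fst ∈ C.supp ↔ e.snd ∈ C.supp) := by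
    intro e he
    have hadj : (complGraph γ).Adj e.fst e.snd := ⟨fst_ne_snd e, e, he, rfl⟩
    exact ⟨fun h => supp_closed h hadj, fun h => supp_closed h hadj.symm⟩
  intro e
  constructor
  · intro he
    by_contra hx
    have hboth : (e.fst ∈ C.supp ∧ e.snd ∈ C.supp) ∨ (e.fst ∉ C.supp ∧ e.snd ∉ C.supp) := by
      unfold Xor' Xor at hx
      tauto
    obtain ⟨v0, hv0⟩ := C.exists_rep
    have hv0' : v0 ∈ C.supp := by rwa [SimpleGraph.ConnectedComponent.mem_supp_iff]
    have hclose : ∀ ⦃a b : ℤ × ℤ⦄, a ∈ C.supp →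
        (graphOf {f | f ∉ γ ∨ f = e}).Adj a b → b ∈ C.supp := by
      intro a b ha hab
      obtain ⟨hne, f, hf, hends⟩ := hab
      rcases hf with hf | rfl
      · exact supp_closed ha ⟨hne, f, hf, hends⟩
      · rcases ends_eq_iff.mp hends with ⟨hA, hB⟩ | ⟨hA, hB⟩ <;>
          rcases hboth with ⟨u1, u2⟩ | ⟨u1, u2⟩
        · exact hB ▸ u2
        · exact absurd ha (hA ▸ u1)
        · exact hA ▸ u1
        · exact absurd ha (hB ▸ u2)
    have hC' : (((graphOf {f | f ∉ γ ∨ f = e}).connectedComponentMk v0).supp).Finite := by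
      apply hCfin.subset
      intro y hy
      rw [SimpleGraph.ConnectedComponent.mem_supp_iff] at hy
      have hreach : (graphOf {f | f ∉ γ ∨ f = e}).Reachable v0 y :=
        (SimpleGraph.ConnectedComponent.exact hy).symm
      exact reachable_mem hclose hv0' hreach
    exact hmin e he _ hC'
  · intro hx
    by_contra he
    have hiff := hnotin e he
    rcases hx with ⟨hA, hB⟩ | ⟨hA, hB⟩
    · exact hB (hiff.mp hA)
    · exact hB (hiff.mpr hA)

end TauAux

namespace TauAux

open SimpleGraph

lemma extraction (x1 x2 : ℤ) (h1 : 0 < x1) (h2 : x1 < x2) (γ : Finset LatticeEdge)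
    (hγ : γ ∈ GammaN {0, (x1, x2)} (2 * (x1 + x2 + 2)).toNat) :
    ∃ p : Prof x1 x2,
      (∀ e : LatticeEdge, e ∈ γ ↔ Xor' (e.fst ∈ profSet p) (e.snd ∈ profSet p)) ∧
      hCount γ = (2 * (x2 + 1)).toNat ∧ vCount γ = (2 * (x1 + 1)).toNat := by
  obtain ⟨⟨hcont, C, hCfin, hXsub⟩, hcard⟩ := hγ
  have hchar := boundary_char hcont hCfin
  set S : Set (ℤ × ℤ) := C.supp with hSdef
  have h0S : ((0 : ℤ), (0 : ℤ)) ∈ S := hXsub (by left; rfl)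
  have hxS : ((x1 : ℤ), (x2 : ℤ)) ∈ S := hXsub (by right; rfl)
  set SF : Finset (ℤ × ℤ) := hCfin.toFinset with hSFdef
  have hmemSF : ∀ v : ℤ × ℤ, v ∈ SF ↔ v ∈ S := fun v => Set.Finite.mem_toFinset hCfin
  -- edge characterization specialized to explicit edges
  have hvchar : ∀ c r : ℤ, (⟨(c, r), false⟩ : LatticeEdge) ∈ γ ↔
      Xor' ((c, r) ∈ S) ((c, r + 1) ∈ S) := fun c r => hchar _
  have hhchar : ∀ c r : ℤ, (⟨(c, r), true⟩ : LatticeEdge) ∈ γ ↔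
      Xor' ((c, r) ∈ S) ((c + 1, r) ∈ S) := fun c r => hchar _
  -- basic reachability facts
  have hclosedS : ∀ ⦃a b : ℤ × ℤ⦄, a ∈ S → (complGraph γ).Adj a b → b ∈ S :=
    fun a b ha h => supp_closed ha h
  have hreach0 : ∀ y ∈ S, (complGraph γ).Reachable ((0 : ℤ), (0 : ℤ)) y := by
    intro y hy
    have hy' : connectedComponentMk _ y = C := hy
    have h0' : connectedComponentMk _ ((0 : ℤ), (0 : ℤ)) = C := h0S
    exact (SimpleGraph.ConnectedComponent.exact (hy'.trans h0'.symm)).symm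
  have hwalk : ∀ y ∈ S, ∃ w : (complGraph γ).Walk ((0 : ℤ), (0 : ℤ)) y,
      ∀ z ∈ w.support, z ∈ S := by
    intro y hy
    obtain ⟨w⟩ := hreach0 y hy
    exact ⟨w, walk_support_subset hclosedS w h0S⟩
  -- crossing facts
  have hcross2 : ∀ v ∈ S, ∀ rr : ℤ, 0 ≤ rr → rr + 1 ≤ v.2 →
      ∃ cs : ℤ, (cs, rr) ∈ S ∧ (cs, rr + 1) ∈ S := by
    intro v hv rr hr0 hr1
    obtain ⟨w, hw⟩ := hwalk v hv
    exact walk_cross2 w hw rr hr0 hr1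
  have hcrossup : ∀ v ∈ S, ∀ rr : ℤ, v.2 ≤ rr → rr + 1 ≤ x2 →
      ∃ cs : ℤ, (cs, rr) ∈ S ∧ (cs, rr + 1) ∈ S := by
    intro v hv rr hr0 hr1
    obtain ⟨w⟩ := (hreach0 v hv).symm.trans (hreach0 _ hxS)
    exact walk_cross2 w (walk_support_subset hclosedS w hv) rr hr0 hr1
  have hcross1S : ∀ c : ℤ, 0 ≤ c → c + 1 ≤ x1 → ∃ r : ℤ, (c, r) ∈ S ∧ (c + 1, r) ∈ S := by
    intro c hc0 hc1
    obtain ⟨w, hw⟩ := hwalk _ hxS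
    exact walk_cross1 w hw c hc0 hc1
  -- occupancy
  have hcol_ne : ∀ c : ℤ, 0 ≤ c → c ≤ x1 → ∃ r : ℤ, (c, r) ∈ S := by
    intro c hc0 hc1
    obtain ⟨w, hw⟩ := hwalk _ hxS
    obtain ⟨v, hv, hv1⟩ := walk_IV1 w hw c hc0 hc1
    exact ⟨v.2, by rwa [show ((c, v.2) : ℤ × ℤ) = v from Prod.ext hv1.symm rfl]⟩
  have hrow_ne : ∀ r : ℤ, 0 ≤ r → r ≤ x2 → ∃ c : ℤ, (c, r) ∈ S := by
    intro r hr0 hr1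
    obtain ⟨w, hw⟩ := hwalk _ hxS
    obtain ⟨v, hv, hv2⟩ := walk_IV2 w hw r hr0 hr1
    exact ⟨v.1, by rwa [show ((v.1, r) : ℤ × ℤ) = v from Prod.ext rfl hv2.symm]⟩
  -- columns and rows finsets
  set ColsF : Finset ℤ := SF.image Prod.fst with hColsdef
  set RowsF : Finset ℤ := SF.image Prod.snd with hRowsdef
  have hmemCols : ∀ c : ℤ, c ∈ ColsF ↔ ∃ r : ℤ, (c, r) ∈ S := by
    intro c
    simp only [hColsdef, Finset.mem_image]
    constructor
    · rintro ⟨v, hv, rfl⟩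
      exact ⟨v.2, (hmemSF v).mp hv⟩
    · rintro ⟨r, hr⟩
      exact ⟨(c, r), (hmemSF _).mpr hr, rfl⟩
  have hmemRows : ∀ r : ℤ, r ∈ RowsF ↔ ∃ c : ℤ, (c, r) ∈ S := by
    intro r
    simp only [hRowsdef, Finset.mem_image]
    constructor
    · rintro ⟨v, hv, rfl⟩
      exact ⟨v.1, (hmemSF v).mp hv⟩
    · rintro ⟨c, hc⟩
      exact ⟨(c, r), (hmemSF _).mpr hc, rfl⟩
  have hcolF_mem : ∀ c r : ℤ, r ∈ colF SF c ↔ (c, r) ∈ S := by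
    intro c r; rw [mem_colF, hmemSF]
  have hrowF_mem : ∀ r c : ℤ, c ∈ rowF SF r ↔ (c, r) ∈ S := by
    intro r c; rw [mem_rowF, hmemSF]
  -- every occupied row is within [0, x2], every occupied column within [0, x1]:
  -- these come later from the counting; first the fiber decomposition.
  set Vf : Finset LatticeEdge := γ.filter (fun e => e.horiz = false) with hVfdef
  set Hf : Finset LatticeEdge := γ.filter (fun e => e.horiz = true) with hHfdef
  have hVfib : Vf.card = ∑ c ∈ ColsF, (Vf.filter (fun e => e.base.1 = c)).card := by
    apply Finset.card_eq_sum_card_fiberwise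
    intro e he
    rw [Finset.mem_coe, hVfdef, Finset.mem_filter] at he
    obtain ⟨heγ, hh⟩ := he
    have hx := (hchar e).mp heγ
    rw [Finset.mem_coe, hmemCols]
    have hsnd : e.snd = (e.base.1, e.base.2 + 1) := snd_vert e hh
    rcases hx with ⟨hA, -⟩ | ⟨hA, -⟩
    · exact ⟨e.base.2, hA⟩
    · exact ⟨e.base.2 + 1, by rwa [hsnd] at hA⟩
  have hHfib : Hf.card = ∑ r ∈ RowsF, (Hf.filter (fun e => e.base.2 = r)).card := by
    apply Finset.card_eq_sum_card_fiberwise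
    intro e he
    rw [Finset.mem_coe, hHfdef, Finset.mem_filter] at he
    obtain ⟨heγ, hh⟩ := he
    have hx := (hchar e).mp heγ
    rw [Finset.mem_coe, hmemRows]
    have hsnd : e.snd = (e.base.1 + 1, e.base.2) := snd_horiz e hh
    rcases hx with ⟨hA, -⟩ | ⟨hA, -⟩
    · exact ⟨e.base.1, hA⟩
    · exact ⟨e.base.1 + 1, by rwa [hsnd] at hA⟩
  -- fibers have at least two elements
  have hV2 : ∀ c ∈ ColsF, 2 ≤ (Vf.filter (fun e => e.base.1 = c)).card := by
    intro c hc
    obtain ⟨r0, hr0⟩ := (hmemCols c).mp hc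
    have hne : (colF SF c).Nonempty := ⟨r0, (hcolF_mem c r0).mpr hr0⟩
    set m := (colF SF c).min' hne with hm
    set M := (colF SF c).max' hne with hM
    have hmS : (c, m) ∈ S := (hcolF_mem c m).mp ((colF SF c).min'_mem hne)
    have hMS : (c, M) ∈ S := (hcolF_mem c M).mp ((colF SF c).max'_mem hne)
    have hmM : m ≤ M := Finset.min'_le _ _ ((colF SF c).max'_mem hne)
    have hm1 : (c, m - 1) ∉ S := by
      intro hmem
      have := Finset.min'_le _ _ ((hcolF_mem c (m - 1)).mpr hmem)
      omega
    have hM1 : (c, M + 1) ∉ S := by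
      intro hmem
      have := Finset.le_max' _ _ ((hcolF_mem c (M + 1)).mpr hmem)
      omega
    have hem : (⟨(c, m - 1), false⟩ : LatticeEdge) ∈ γ := by
      rw [hvchar]
      right
      constructor
      · rwa [show m - 1 + 1 = m by ring]
      · exact hm1
    have heM : (⟨(c, M), false⟩ : LatticeEdge) ∈ γ := by
      rw [hvchar]
      left
      exact ⟨hMS, hM1⟩
    have hsub : ({⟨(c, m - 1), false⟩, ⟨(c, M), false⟩} : Finset LatticeEdge) ⊆
        Vf.filter (fun e => e.base.1 = c) := by
      intro e he
      rcases Finset.mem_insert.mp he with rfl | he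
      · rw [Finset.mem_filter, hVfdef, Finset.mem_filter]
        exact ⟨⟨hem, rfl⟩, rfl⟩
      · rw [Finset.mem_singleton] at he
        subst he
        rw [Finset.mem_filter, hVfdef, Finset.mem_filter]
        exact ⟨⟨heM, rfl⟩, rfl⟩
    have hcard2 : ({⟨(c, m - 1), false⟩, ⟨(c, M), false⟩} : Finset LatticeEdge).card = 2 := by
      rw [Finset.card_pair]
      intro hEq
      have := congrArg (fun e => e.base.2) hEq
      simp at this
      omega
    calc 2 = _ := hcard2.symm
    _ ≤ _ := Finset.card_le_card hsub
  have hH2 : ∀ r ∈ RowsF, 2 ≤ (Hf.filter (fun e => e.base.2 = r)).card := by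
    intro r hr
    obtain ⟨c0, hc0⟩ := (hmemRows r).mp hr
    have hne : (rowF SF r).Nonempty := ⟨c0, (hrowF_mem r c0).mpr hc0⟩
    set m := (rowF SF r).min' hne with hm
    set M := (rowF SF r).max' hne with hM
    have hmS : (m, r) ∈ S := (hrowF_mem r m).mp ((rowF SF r).min'_mem hne)
    have hMS : (M, r) ∈ S := (hrowF_mem r M).mp ((rowF SF r).max'_mem hne)
    have hmM : m ≤ M := Finset.min'_le _ _ ((rowF SF r).max'_mem hne)
    have hm1 : (m - 1, r) ∉ S := by
      intro hmem
      have := Finset.min'_le _ _ ((hrowF_mem r (m - 1)).mpr hmem)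
      omega
    have hM1 : (M + 1, r) ∉ S := by
      intro hmem
      have := Finset.le_max' _ _ ((hrowF_mem r (M + 1)).mpr hmem)
      omega
    have hem : (⟨(m - 1, r), true⟩ : LatticeEdge) ∈ γ := by
      rw [hhchar]
      right
      constructor
      · rwa [show m - 1 + 1 = m by ring]
      · exact hm1
    have heM : (⟨(M, r), true⟩ : LatticeEdge) ∈ γ := by
      rw [hhchar]
      left
      exact ⟨hMS, hM1⟩
    have hsub : ({⟨(m - 1, r), true⟩, ⟨(M, r), true⟩} : Finset LatticeEdge) ⊆
        Hf.filter (fun e => e.base.2 = r) := by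
      intro e he
      rcases Finset.mem_insert.mp he with rfl | he
      · rw [Finset.mem_filter, hHfdef, Finset.mem_filter]
        exact ⟨⟨hem, rfl⟩, rfl⟩
      · rw [Finset.mem_singleton] at he
        subst he
        rw [Finset.mem_filter, hHfdef, Finset.mem_filter]
        exact ⟨⟨heM, rfl⟩, rfl⟩
    have hcard2 : ({⟨(m - 1, r), true⟩, ⟨(M, r), true⟩} : Finset LatticeEdge).card = 2 := by
      rw [Finset.card_pair]
      intro hEq
      have := congrArg (fun e => e.base.1) hEq
      simp at this
      omega
    calc 2 = _ := hcard2.symm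
    _ ≤ _ := Finset.card_le_card hsub
  -- a small helper for three-element subsets
  -- subset inclusions
  have hColsIcc : Finset.Icc (0:ℤ) x1 ⊆ ColsF := by
    intro c hc
    rw [Finset.mem_Icc] at hc
    obtain ⟨r, hr⟩ := hcol_ne c hc.1 hc.2
    exact (hmemCols c).mpr ⟨r, hr⟩
  have hRowsIcc : Finset.Icc (0:ℤ) x2 ⊆ RowsF := by
    intro r hr
    rw [Finset.mem_Icc] at hr
    obtain ⟨c, hc⟩ := hrow_ne r hr.1 hr.2
    exact (hmemRows r).mpr ⟨c, hc⟩
  have hIccCard1 : (Finset.Icc (0:ℤ) x1).card = (x1+1).toNat := by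
    rw [Int.card_Icc]; omega
  have hIccCard2 : (Finset.Icc (0:ℤ) x2).card = (x2+1).toNat := by
    rw [Int.card_Icc]; omega
  have hVge : 2 * ColsF.card ≤ Vf.card := by
    rw [hVfib]
    calc 2 * ColsF.card = ∑ _c ∈ ColsF, 2 := by rw [Finset.sum_const, smul_eq_mul]; ring
    _ ≤ _ := Finset.sum_le_sum hV2
  have hHge : 2 * RowsF.card ≤ Hf.card := by
    rw [hHfib]
    calc 2 * RowsF.card = ∑ _r ∈ RowsF, 2 := by rw [Finset.sum_const, smul_eq_mul]; ring
    _ ≤ _ := Finset.sum_le_sum hH2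
  have hVH : Vf.card + Hf.card = γ.card := by
    have hsplit := Finset.card_filter_add_card_filter_not
      (s := γ) (p := fun e => e.horiz = false)
    have hfe : γ.filter (fun e => ¬(e.horiz = false)) = Hf := by
      rw [hHfdef]
      apply Finset.filter_congr
      intro e _
      simp
    rw [hfe] at hsplit
    exact hsplit
  have hC1 : (x1+1).toNat ≤ ColsF.card := hIccCard1 ▸ Finset.card_le_card hColsIcc
  have hR1 : (x2+1).toNat ≤ RowsF.card := hIccCard2 ▸ Finset.card_le_card hRowsIcc
  have hNN : γ.card = 2*(x1+1).toNat + 2*(x2+1).toNat := by rw [hcard]; omega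
  have hColsCard : ColsF.card = (x1+1).toNat := by omega
  have hRowsCard : RowsF.card = (x2+1).toNat := by omega
  have hVcard : Vf.card = 2*(x1+1).toNat := by omega
  have hHcard : Hf.card = 2*(x2+1).toNat := by omega
  have hColsEq : ColsF = Finset.Icc 0 x1 :=
    (Finset.eq_of_subset_of_card_le hColsIcc (by omega)).symm
  have hRowsEq : RowsF = Finset.Icc 0 x2 :=
    (Finset.eq_of_subset_of_card_le hRowsIcc (by omega)).symm
  have hSbox : ∀ v ∈ S, 0 ≤ v.1 ∧ v.1 ≤ x1 ∧ 0 ≤ v.2 ∧ v.2 ≤ x2 := by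
    intro v hv
    have hc : v.1 ∈ ColsF := (hmemCols v.1).mpr ⟨v.2, hv⟩
    have hr : v.2 ∈ RowsF := (hmemRows v.2).mpr ⟨v.1, hv⟩
    rw [hColsEq, Finset.mem_Icc] at hc
    rw [hRowsEq, Finset.mem_Icc] at hr
    exact ⟨hc.1, hc.2, hr.1, hr.2⟩
  -- fibers are exactly 2
  have hVfib2 : ∀ c ∈ ColsF, (Vf.filter (fun e => e.base.1 = c)).card = 2 := by
    intro c hc
    by_contra hnee
    have hlt : ∑ c' ∈ ColsF, 2 < ∑ c' ∈ ColsF, (Vf.filter (fun e => e.base.1 = c')).card :=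
      Finset.sum_lt_sum hV2 ⟨c, hc, by have := hV2 c hc; omega⟩
    rw [Finset.sum_const, smul_eq_mul] at hlt
    omega
  have hHfib2 : ∀ r ∈ RowsF, (Hf.filter (fun e => e.base.2 = r)).card = 2 := by
    intro r hr
    by_contra hnee
    have hlt : ∑ r' ∈ RowsF, 2 < ∑ r' ∈ RowsF, (Hf.filter (fun e => e.base.2 = r')).card :=
      Finset.sum_lt_sum hH2 ⟨r, hr, by have := hH2 r hr; omega⟩
    rw [Finset.sum_const, smul_eq_mul] at hlt
    omega
  -- interval property for columns
  have hcolItv : ∀ c r r' t : ℤ, (c, r) ∈ S → (c, r') ∈ S → r ≤ t → t ≤ r' → (c, t) ∈ S := by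
    intro c r r' t hr hr' hrt htr
    by_contra hno
    have hcC : c ∈ ColsF := (hmemCols c).mpr ⟨r, hr⟩
    have hne : (colF SF c).Nonempty := ⟨r, (hcolF_mem c r).mpr hr⟩
    set m := (colF SF c).min' hne with hmdef
    set M := (colF SF c).max' hne with hMdef
    have hmS : (c, m) ∈ S := (hcolF_mem c m).mp (Finset.min'_mem _ _)
    have hMS : (c, M) ∈ S := (hcolF_mem c M).mp (Finset.max'_mem _ _)
    have hmr : m ≤ r := Finset.min'_le _ _ ((hcolF_mem c r).mpr hr)
    have hrM : r' ≤ M := Finset.le_max' _ _ ((hcolF_mem c r').mpr hr')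
    have hm1 : (c, m - 1) ∉ S := by
      intro hmem
      have := Finset.min'_le _ _ ((hcolF_mem c (m - 1)).mpr hmem)
      omega
    have hM1 : (c, M + 1) ∉ S := by
      intro hmem
      have := Finset.le_max' _ _ ((hcolF_mem c (M + 1)).mpr hmem)
      omega
    have hrt' : r < t := by
      rcases eq_or_lt_of_le hrt with rfl | h
      · exact absurd hr hno
      · exact h
    set tset := (colF SF c).filter (fun z => z < t) with htsetdef
    have htne : tset.Nonempty := ⟨r, by
      rw [htsetdef, Finset.mem_filter]
      exact ⟨(hcolF_mem c r).mpr hr, hrt'⟩⟩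
    set r1 := tset.max' htne with hr1def
    have hr1f : r1 ∈ tset := Finset.max'_mem _ _
    have hr1col : r1 ∈ colF SF c := (Finset.mem_filter.mp hr1f).1
    have hr1lt : r1 < t := by
      have := (Finset.mem_filter.mp hr1f).2
      simpa using this
    have hr1S : (c, r1) ∈ S := (hcolF_mem c r1).mp hr1col
    have hr1m : m ≤ r1 := Finset.min'_le _ _ hr1col
    have hr11 : (c, r1 + 1) ∉ S := by
      intro hmem
      have hmemcol : r1 + 1 ∈ colF SF c := (hcolF_mem c (r1+1)).mpr hmem
      rcases eq_or_lt_of_le (show r1 + 1 ≤ t by omega) with heq | hlt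
      · rw [heq] at hmemcol
        exact hno ((hcolF_mem c t).mp hmemcol)
      · have : r1 + 1 ∈ tset := by
          rw [htsetdef, Finset.mem_filter]
          exact ⟨hmemcol, hlt⟩
        have := Finset.le_max' _ _ this
        omega
    have hem : (⟨(c, m - 1), false⟩ : LatticeEdge) ∈ γ := by
      rw [hvchar]
      right
      exact ⟨by rwa [show m - 1 + 1 = m by ring], hm1⟩
    have heM : (⟨(c, M), false⟩ : LatticeEdge) ∈ γ := by
      rw [hvchar]; left; exact ⟨hMS, hM1⟩
    have he3 : (⟨(c, r1), false⟩ : LatticeEdge) ∈ γ := by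
      rw [hvchar]; left; exact ⟨hr1S, hr11⟩
    have hr1M : r1 < M := by omega
    have hmem1 : (⟨(c, m - 1), false⟩ : LatticeEdge) ∈ Vf.filter (fun e => e.base.1 = c) := by
      rw [Finset.mem_filter, hVfdef, Finset.mem_filter]
      exact ⟨⟨hem, rfl⟩, rfl⟩
    have hmem2 : (⟨(c, r1), false⟩ : LatticeEdge) ∈ Vf.filter (fun e => e.base.1 = c) := by
      rw [Finset.mem_filter, hVfdef, Finset.mem_filter]
      exact ⟨⟨he3, rfl⟩, rfl⟩
    have hmem3 : (⟨(c, M), false⟩ : LatticeEdge) ∈ Vf.filter (fun e => e.base.1 = c) := by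
      rw [Finset.mem_filter, hVfdef, Finset.mem_filter]
      exact ⟨⟨heM, rfl⟩, rfl⟩
    have h3c := three_le_card hmem1 hmem2 hmem3
      (by intro h; simp at h; omega)
      (by intro h; simp at h; omega)
      (by intro h; simp at h; omega)
    have := hVfib2 c hcC
    omega
  have hrowItv : ∀ r a b t : ℤ, (a, r) ∈ S → (b, r) ∈ S → a ≤ t → t ≤ b → (t, r) ∈ S := by
    intro r a b t ha hb hat htb
    by_contra hno
    have hrR : r ∈ RowsF := (hmemRows r).mpr ⟨a, ha⟩
    have hne : (rowF SF r).Nonempty := ⟨a, (hrowF_mem r a).mpr ha⟩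
    set m := (rowF SF r).min' hne with hmdef
    set M := (rowF SF r).max' hne with hMdef
    have hmS : (m, r) ∈ S := (hrowF_mem r m).mp (Finset.min'_mem _ _)
    have hMS : (M, r) ∈ S := (hrowF_mem r M).mp (Finset.max'_mem _ _)
    have hmr : m ≤ a := Finset.min'_le _ _ ((hrowF_mem r a).mpr ha)
    have hrM : b ≤ M := Finset.le_max' _ _ ((hrowF_mem r b).mpr hb)
    have hm1 : (m - 1, r) ∉ S := by
      intro hmem
      have := Finset.min'_le _ _ ((hrowF_mem r (m - 1)).mpr hmem)
      omega
    have hM1 : (M + 1, r) ∉ S := by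
      intro hmem
      have := Finset.le_max' _ _ ((hrowF_mem r (M + 1)).mpr hmem)
      omega
    have hrt' : a < t := by
      rcases eq_or_lt_of_le hat with rfl | h
      · exact absurd ha hno
      · exact h
    set tset := (rowF SF r).filter (fun z => z < t) with htsetdef
    have htne : tset.Nonempty := ⟨a, by
      rw [htsetdef, Finset.mem_filter]
      exact ⟨(hrowF_mem r a).mpr ha, hrt'⟩⟩
    set c1 := tset.max' htne with hc1def
    have hc1f : c1 ∈ tset := Finset.max'_mem _ _
    have hc1row : c1 ∈ rowF SF r := (Finset.mem_filter.mp hc1f).1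
    have hc1lt : c1 < t := by
      have := (Finset.mem_filter.mp hc1f).2
      simpa using this
    have hc1S : (c1, r) ∈ S := (hrowF_mem r c1).mp hc1row
    have hc1m : m ≤ c1 := Finset.min'_le _ _ hc1row
    have hc11 : (c1 + 1, r) ∉ S := by
      intro hmem
      have hmemrow : c1 + 1 ∈ rowF SF r := (hrowF_mem r (c1+1)).mpr hmem
      rcases eq_or_lt_of_le (show c1 + 1 ≤ t by omega) with heq | hlt
      · rw [heq] at hmemrow
        exact hno ((hrowF_mem r t).mp hmemrow)
      · have : c1 + 1 ∈ tset := by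
          rw [htsetdef, Finset.mem_filter]
          exact ⟨hmemrow, hlt⟩
        have := Finset.le_max' _ _ this
        omega
    have hem : (⟨(m - 1, r), true⟩ : LatticeEdge) ∈ γ := by
      rw [hhchar]
      right
      exact ⟨by rwa [show m - 1 + 1 = m by ring], hm1⟩
    have heM : (⟨(M, r), true⟩ : LatticeEdge) ∈ γ := by
      rw [hhchar]; left; exact ⟨hMS, hM1⟩
    have he3 : (⟨(c1, r), true⟩ : LatticeEdge) ∈ γ := by
      rw [hhchar]; left; exact ⟨hc1S, hc11⟩
    have hc1M : c1 < M := by omega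
    have hmem1 : (⟨(m - 1, r), true⟩ : LatticeEdge) ∈ Hf.filter (fun e => e.base.2 = r) := by
      rw [Finset.mem_filter, hHfdef, Finset.mem_filter]
      exact ⟨⟨hem, rfl⟩, rfl⟩
    have hmem2 : (⟨(c1, r), true⟩ : LatticeEdge) ∈ Hf.filter (fun e => e.base.2 = r) := by
      rw [Finset.mem_filter, hHfdef, Finset.mem_filter]
      exact ⟨⟨he3, rfl⟩, rfl⟩
    have hmem3 : (⟨(M, r), true⟩ : LatticeEdge) ∈ Hf.filter (fun e => e.base.2 = r) := by
      rw [Finset.mem_filter, hHfdef, Finset.mem_filter]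
      exact ⟨⟨heM, rfl⟩, rfl⟩
    have h3c := three_le_card hmem1 hmem2 hmem3
      (by intro h; simp at h; omega)
      (by intro h; simp at h; omega)
      (by intro h; simp at h; omega)
    have := hHfib2 r hrR
    omega
  -- the profile functions
  set lfun : ℤ → ℤ := fun c =>
    if h : (colF SF c).Nonempty then (colF SF c).min' h else 0 with hlfun
  set ufun : ℤ → ℤ := fun c =>
    if h : (colF SF c).Nonempty then (colF SF c).max' h else 0 with hufun
  have hlspec : ∀ c : ℤ, 0 ≤ c → c ≤ x1 →
      ((c, lfun c) ∈ S ∧ ∀ r, (c, r) ∈ S → lfun c ≤ r) := by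
    intro c hc0 hc1
    obtain ⟨r, hr⟩ := hcol_ne c hc0 hc1
    have hne : (colF SF c).Nonempty := ⟨r, (hcolF_mem c r).mpr hr⟩
    have heq : lfun c = (colF SF c).min' hne := by rw [hlfun]; exact dif_pos hne
    constructor
    · rw [heq]; exact (hcolF_mem _ _).mp (Finset.min'_mem _ _)
    · intro r' hr'
      rw [heq]
      exact Finset.min'_le _ _ ((hcolF_mem _ _).mpr hr')
  have huspec : ∀ c : ℤ, 0 ≤ c → c ≤ x1 →
      ((c, ufun c) ∈ S ∧ ∀ r, (c, r) ∈ S → r ≤ ufun c) := by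
    intro c hc0 hc1
    obtain ⟨r, hr⟩ := hcol_ne c hc0 hc1
    have hne : (colF SF c).Nonempty := ⟨r, (hcolF_mem c r).mpr hr⟩
    have heq : ufun c = (colF SF c).max' hne := by rw [hufun]; exact dif_pos hne
    constructor
    · rw [heq]; exact (hcolF_mem _ _).mp (Finset.max'_mem _ _)
    · intro r' hr'
      rw [heq]
      exact Finset.le_max' _ _ ((hcolF_mem _ _).mpr hr')
  have hl0 : lfun 0 = 0 := by
    have hsp := hlspec 0 le_rfl (by omega)
    have hle := hsp.2 0 h0S
    have hge := (hSbox _ hsp.1).2.2.1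
    omega
  have hux : ufun x1 = x2 := by
    have hsp := huspec x1 (by omega) le_rfl
    have hge := hsp.2 x2 hxS
    have hle := (hSbox _ hsp.1).2.2.2
    omega
  have hlu : ∀ c, 0 ≤ c → c ≤ x1 → lfun c ≤ ufun c := by
    intro c h0 h1
    exact (hlspec c h0 h1).2 _ (huspec c h0 h1).1
  have hlmono : ∀ c, 0 ≤ c → c + 1 ≤ x1 → lfun c ≤ lfun (c + 1) := by
    intro c h0 h1
    by_contra hbad
    have hmem1 := (hlspec (c+1) (by omega) h1).1
    exact lmono_aux h0S hrowItv hcross2 h0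
      (hlspec c h0 (by omega)).2 hmem1 ((hSbox _ hmem1).2.2.1) (by omega)
  have humono : ∀ c, 0 ≤ c → c + 1 ≤ x1 → ufun c ≤ ufun (c + 1) := by
    intro c h0 h1
    by_contra hbad
    have hmemc := (huspec c h0 (by omega)).1
    exact umono_aux hxS hrowItv hcrossup h1
      (huspec (c+1) (by omega) h1).2 hmemc ((hSbox _ hmemc).2.2.2) (by omega)
  have hover : ∀ c, 0 ≤ c → c + 1 ≤ x1 → lfun (c + 1) ≤ ufun c := by
    intro c h0 h1
    obtain ⟨r, hr, hr'⟩ := hcross1S c h0 h1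
    exact le_trans ((hlspec (c+1) (by omega) h1).2 r hr') ((huspec c h0 (by omega)).2 r hr)
  set p : Prof x1 x2 := ⟨lfun, ufun, hl0, hux, hlu, hlmono, humono, hover⟩ with hpdef
  have hSeq : S = profSet p := by
    ext v
    constructor
    · intro hv
      have hb := hSbox v hv
      exact ⟨hb.1, hb.2.1, (hlspec v.1 hb.1 hb.2.1).2 v.2 hv,
        (huspec v.1 hb.1 hb.2.1).2 v.2 hv⟩
    · rintro ⟨hc0, hc1, hlr, hru⟩
      exact hcolItv v.1 (lfun v.1) (ufun v.1) v.2
        (hlspec v.1 hc0 hc1).1 (huspec v.1 hc0 hc1).1 hlr hru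
  refine ⟨p, ?_, ?_, ?_⟩
  · intro e
    rw [← hSeq]
    exact hchar e
  · show (γ.filter (fun e => e.horiz = true)).card = (2 * (x2 + 1)).toNat
    have : (γ.filter (fun e => e.horiz = true)).card = Hf.card := by rw [hHfdef]
    omega
  · show (γ.filter (fun e => e.horiz = false)).card = (2 * (x1 + 1)).toNat
    have : (γ.filter (fun e => e.horiz = false)).card = Vf.card := by rw [hVfdef]
    omega

end TauAux

namespace TauAux

open SimpleGraph MeasureTheory

variable {x1 x2 : ℤ}

/-- the cylinder event: `γ` closed, `PP` open -/
def contourEvent (γ PP : Finset LatticeEdge) : Set (LatticeEdge → Bool) :=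
  {ω | ∀ e ∈ γ ∪ PP, ω e = decide (e ∈ PP)}

lemma contourEvent_measurable (γ PP : Finset LatticeEdge) :
    MeasurableSet (contourEvent γ PP) := by
  have heq : contourEvent γ PP =
      ⋂ e ∈ (↑(γ ∪ PP) : Set LatticeEdge), (fun ω : LatticeEdge → Bool => ω e) ⁻¹' {decide (e ∈ PP)} := by
    ext ω
    simp [contourEvent]
  rw [heq]
  exact MeasurableSet.biInter (Set.to_countable _)
    (fun e _ => measurable_pi_apply e (measurableSet_singleton _))

lemma path_not_bd {γ : Finset LatticeEdge} {p : Prof x1 x2}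
    (hchar : ∀ e : LatticeEdge, e ∈ γ ↔ Xor' (e.fst ∈ profSet p) (e.snd ∈ profSet p)) :
    ∀ e ∈ pathE p, e ∉ γ := by
  intro e he hmem
  have hint := pathE_internal p he
  have := (hchar e).mp hmem
  unfold Xor' Xor at this
  tauto

lemma event_open_closed {γ PP : Finset LatticeEdge} {ω : LatticeEdge → Bool}
    (hd : ∀ e ∈ PP, e ∉ γ) (hω : ω ∈ contourEvent γ PP) :
    (∀ e ∈ γ, ω e = false) ∧ (∀ e ∈ PP, ω e = true) := by
  constructor
  · intro e he
    have h := hω e (Finset.mem_union_left _ he)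
    rw [h]
    have : e ∉ PP := fun hmem => hd e hmem he
    simp [this]
  · intro e he
    have h := hω e (Finset.mem_union_right _ he)
    rw [h]
    simp [he]

lemma open_closure {γ : Finset LatticeEdge} {p : Prof x1 x2}
    (hchar : ∀ e : LatticeEdge, e ∈ γ ↔ Xor' (e.fst ∈ profSet p) (e.snd ∈ profSet p))
    {ω : LatticeEdge → Bool} (hclosed : ∀ e ∈ γ, ω e = false) :
    ∀ ⦃a b : ℤ × ℤ⦄, a ∈ profSet p → (openGraph ω).Adj a b → b ∈ profSet p := by
  intro a b ha hab
  obtain ⟨hne, f, hf, hends⟩ := hab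
  have hfopen : ω f = true := hf
  have hfγ : f ∉ γ := by
    intro hmem
    rw [hclosed f hmem] at hfopen
    exact absurd hfopen (by simp)
  have hiff : f.fst ∈ profSet p ↔ f.snd ∈ profSet p := by
    have h := hchar f
    unfold Xor' Xor at h
    tauto
  rcases ends_eq_iff.mp hends with ⟨hA, hB⟩ | ⟨hA, hB⟩
  · have h1 : f.fst ∈ profSet p := by rwa [hA]
    have h2 := hiff.mp h1
    rwa [hB] at h2
  · have h1 : f.snd ∈ profSet p := by rwa [hB]
    have h2 := hiff.mpr h1
    rwa [hA] at h2

lemma profSet_finite (p : Prof x1 x2) : (profSet p).Finite := by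
  apply Set.Finite.subset (Set.finite_Icc ((0:ℤ), (0:ℤ)) ((x1, x2) : ℤ × ℤ))
  rintro ⟨c, r⟩ ⟨h0, h1, h2, h3⟩
  rw [Set.mem_Icc]
  constructor
  · exact ⟨h0, le_trans (p.l_nonneg h0 h1) h2⟩
  · exact ⟨h1, le_trans h3 (p.u_le h0 h1)⟩

lemma origin_mem_profSet (p : Prof x1 x2) (hx1 : 0 ≤ x1) :
    ((0:ℤ), (0:ℤ)) ∈ profSet p :=
  ⟨le_rfl, hx1, le_of_eq p.hl0, le_trans (le_of_eq p.hl0.symm) (p.hlu 0 le_rfl hx1)⟩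

/-- the contour event implies that `0` and `x` lie in a common finite cluster -/
lemma event_subset_sfc {γ : Finset LatticeEdge} {p : Prof x1 x2} (hx1 : 0 ≤ x1)
    (hchar : ∀ e : LatticeEdge, e ∈ γ ↔ Xor' (e.fst ∈ profSet p) (e.snd ∈ profSet p)) :
    contourEvent γ (pathE p) ⊆ {ω | SameFiniteCluster ω (0, 0) (x1, x2)} := by
  intro ω hω
  obtain ⟨hclosed, hopen⟩ := event_open_closed (path_not_bd hchar) hω
  have hcl := open_closure hchar hclosed
  have h0p := origin_mem_profSet p hx1
  have hreachx : (openGraph ω).Reachable ((0:ℤ), (0:ℤ)) ((x1 : ℤ), (x2 : ℤ)) := by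
    refine reach_L p hx1 hopen x1 hx1 le_rfl x2 (p.l_le hx1 le_rfl) ?_
    rw [Lnext, if_pos rfl]
  refine ⟨(openGraph ω).connectedComponentMk ((0:ℤ), (0:ℤ)), rfl, ?_, ?_⟩
  · exact SimpleGraph.ConnectedComponent.sound hreachx.symm
  · apply (profSet_finite p).subset
    intro y hy
    have hy' : (openGraph ω).Reachable ((0:ℤ), (0:ℤ)) y :=
      (SimpleGraph.ConnectedComponent.exact hy).symm
    exact reachable_mem hcl h0p hy'

/-- one-sided comparison used for disjointness -/
lemma profile_squeeze {γa : Finset LatticeEdge} {pa pb : Prof x1 x2} (hx1 : 0 ≤ x1)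
    (hchar : ∀ e : LatticeEdge, e ∈ γa ↔ Xor' (e.fst ∈ profSet pa) (e.snd ∈ profSet pa))
    {ω : LatticeEdge → Bool}
    (hclosed : ∀ e ∈ γa, ω e = false) (hopen : ∀ e ∈ pathE pb, ω e = true) :
    ∀ c, 0 ≤ c → c ≤ x1 →
      (pa.l c ≤ pb.l c ∧ pb.l c ≤ pa.u c) ∧ (pb.u c ≤ pa.u c ∧ pa.l c ≤ pb.u c) := by
  intro c h0 h1
  have hcl := open_closure hchar hclosed
  have h0p := origin_mem_profSet pa hx1
  have hL : (openGraph ω).Reachable ((0:ℤ), (0:ℤ)) (c, pb.l c) :=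
    reach_L pb hx1 hopen c h0 h1 (pb.l c) le_rfl (Lnext_ge pb h0 h1)
  have hU : (openGraph ω).Reachable ((0:ℤ), (0:ℤ)) (c, pb.u c) :=
    reach_U pb hx1 hopen c h0 h1 (pb.u c) (Uprev_le pb h0 h1) le_rfl
  have hLm : (c, pb.l c) ∈ profSet pa := reachable_mem hcl h0p hL
  have hUm : (c, pb.u c) ∈ profSet pa := reachable_mem hcl h0p hU
  exact ⟨⟨hLm.2.2.1, hLm.2.2.2⟩, ⟨hUm.2.2.2, hUm.2.2.1⟩⟩

lemma events_disjoint {γ γ' : Finset LatticeEdge} {p p' : Prof x1 x2} (hx1 : 0 ≤ x1)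
    (hchar : ∀ e : LatticeEdge, e ∈ γ ↔ Xor' (e.fst ∈ profSet p) (e.snd ∈ profSet p))
    (hchar' : ∀ e : LatticeEdge, e ∈ γ' ↔ Xor' (e.fst ∈ profSet p') (e.snd ∈ profSet p'))
    (hne : γ ≠ γ') :
    Disjoint (contourEvent γ (pathE p)) (contourEvent γ' (pathE p')) := by
  rw [Set.disjoint_left]
  intro ω hω hω'
  apply hne
  obtain ⟨hclosed, hopen⟩ := event_open_closed (path_not_bd hchar) hω
  obtain ⟨hclosed', hopen'⟩ := event_open_closed (path_not_bd hchar') hω'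
  have hs1 := profile_squeeze hx1 hchar hclosed hopen'
  have hs2 := profile_squeeze hx1 hchar' hclosed' hopen
  have hlu : ∀ c, 0 ≤ c → c ≤ x1 → p.l c = p'.l c ∧ p.u c = p'.u c := by
    intro c h0 h1
    have a1 := (hs1 c h0 h1).1.1
    have a2 := (hs1 c h0 h1).2.1
    have b1 := (hs2 c h0 h1).1.1
    have b2 := (hs2 c h0 h1).2.1
    omega
  have hPS : profSet p = profSet p' := by
    ext v
    constructor
    · rintro ⟨h0, h1, h2, h3⟩
      have := hlu v.1 h0 h1
      exact ⟨h0, h1, by omega, by omega⟩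
    · rintro ⟨h0, h1, h2, h3⟩
      have := hlu v.1 h0 h1
      exact ⟨h0, h1, by omega, by omega⟩
  ext e
  rw [hchar e, hchar' e, hPS]

end TauAux

namespace TauAux

open MeasureTheory

lemma edgeProb_bounds {ph pv : ℝ} (hphpv : ph ≤ pv) (e : LatticeEdge) :
    ph ≤ edgeProb ph pv e ∧ edgeProb ph pv e ≤ pv := by
  unfold edgeProb
  split
  · exact ⟨le_rfl, hphpv⟩
  · exact ⟨hphpv, le_rfl⟩

lemma prob_event' {ph pv : ℝ} {P : Measure (LatticeEdge → Bool)}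
    (hP : IsBernoulliProduct ph pv P) (hph : 0 < ph) (hphpv : ph ≤ pv) (hpv : pv < 1)
    (γ Q : Finset LatticeEdge) (hd : Disjoint γ Q) :
    P (contourEvent γ Q) =
      ENNReal.ofReal ((∏ e ∈ γ, (1 - edgeProb ph pv e)) * ∏ e ∈ Q, edgeProb ph pv e) := by
  have hnn1 : ∀ e : LatticeEdge, 0 ≤ 1 - edgeProb ph pv e := by
    intro e
    have := (edgeProb_bounds hphpv e).2
    linarith
  have hnn2 : ∀ e : LatticeEdge, 0 ≤ edgeProb ph pv e := by
    intro e
    have := (edgeProb_bounds hphpv e).1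
    linarith
  have h := hP.2 (γ ∪ Q) (fun e => decide (e ∈ Q))
  have hsets : contourEvent γ Q = {ω | ∀ e ∈ γ ∪ Q, ω e = decide (e ∈ Q)} := rfl
  rw [hsets, h, Finset.prod_union hd]
  have h1 : ∏ e ∈ γ, ENNReal.ofReal
      (if (decide (e ∈ Q) : Bool) then edgeProb ph pv e else 1 - edgeProb ph pv e) =
      ∏ e ∈ γ, ENNReal.ofReal (1 - edgeProb ph pv e) := by
    apply Finset.prod_congr rfl
    intro e he
    have hnot : e ∉ Q := Finset.disjoint_left.mp hd he
    simp [hnot]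
  have h2 : ∏ e ∈ Q, ENNReal.ofReal
      (if (decide (e ∈ Q) : Bool) then edgeProb ph pv e else 1 - edgeProb ph pv e) =
      ∏ e ∈ Q, ENNReal.ofReal (edgeProb ph pv e) := by
    apply Finset.prod_congr rfl
    intro e he
    simp [he]
  rw [h1, h2, ← ENNReal.ofReal_prod_of_nonneg (fun e _ => hnn1 e),
    ← ENNReal.ofReal_prod_of_nonneg (fun e _ => hnn2 e),
    ← ENNReal.ofReal_mul (Finset.prod_nonneg (fun e _ => hnn1 e))]

lemma prod_closed_eq {ph pv : ℝ} (γ : Finset LatticeEdge) (A B : ℕ)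
    (hH : hCount γ = A) (hV : vCount γ = B) :
    ∏ e ∈ γ, (1 - edgeProb ph pv e) = (1 - ph) ^ A * (1 - pv) ^ B := by
  have hsplit := Finset.prod_filter_mul_prod_filter_not γ (fun e => e.horiz = true)
    (fun e => 1 - edgeProb ph pv e)
  rw [← hsplit]
  have hA : ∏ e ∈ γ.filter (fun e => e.horiz = true), (1 - edgeProb ph pv e) =
      (1 - ph) ^ A := by
    rw [Finset.prod_congr rfl (g := fun _ => 1 - ph)
      (fun e he => by
        rw [Finset.mem_filter] at he
        simp [edgeProb, he.2]),
      Finset.prod_const, ← hH]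
    rfl
  have hfe : γ.filter (fun e => ¬(e.horiz = true)) = γ.filter (fun e => e.horiz = false) :=
    Finset.filter_congr (fun e _ => by simp)
  have hB : ∏ e ∈ γ.filter (fun e => ¬(e.horiz = true)), (1 - edgeProb ph pv e) =
      (1 - pv) ^ B := by
    rw [hfe]
    rw [Finset.prod_congr rfl (g := fun _ => 1 - pv)
      (fun e he => by
        rw [Finset.mem_filter] at he
        simp [edgeProb, he.2]),
      Finset.prod_const, ← hV]
    rfl
  rw [hA, hB]

lemma prod_open_ge {ph pv : ℝ} (hph : 0 ≤ ph) (hph1 : ph ≤ 1) (hphpv : ph ≤ pv)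
    (Q : Finset LatticeEdge) (n : ℕ) (hn : Q.card ≤ n) :
    ph ^ n ≤ ∏ e ∈ Q, edgeProb ph pv e := by
  calc ph ^ n ≤ ph ^ Q.card := pow_le_pow_of_le_one hph hph1 hn
  _ = ∏ _e ∈ Q, ph := (Finset.prod_const ph).symm
  _ ≤ ∏ e ∈ Q, edgeProb ph pv e :=
      Finset.prod_le_prod (fun _ _ => hph) (fun e _ => (edgeProb_bounds hphpv e).1)

lemma main_arith (ph pv : ℝ) (hph : 0 < ph) (hphv : ph < pv) (hpv : pv < 1) (k1 k2 : ℕ) :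
    lam ph ^ (2*k2+2) * lam pv ^ (2*k1+2) * ph ^ (2*(2*k1+2*k2+4)) ≤
      (1-ph) ^ (2*k2+2) * (1-pv) ^ (2*k1+2) * ph ^ (2*(k1+k2)) := by
  have hph1 : ph < 1 := hphv.trans hpv
  have hpv0 : 0 < pv := hph.trans hphv
  have h1ph : (0:ℝ) ≤ 1 - ph := by linarith
  have h1pv : (0:ℝ) ≤ 1 - pv := by linarith
  have key : ph ^ (2*(2*k1+2*k2+4)) ≤ (ph^(2*k2+2) * pv^(2*k1+2)) * ph^(2*(k1+k2)) := by
    calc ph ^ (2*(2*k1+2*k2+4)) ≤ ph ^ ((2*k2+2) + ((2*k1+2) + 2*(k1+k2))) :=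
        pow_le_pow_of_le_one hph.le hph1.le (by omega)
    _ = (ph^(2*k2+2) * ph^(2*k1+2)) * ph^(2*(k1+k2)) := by
        rw [pow_add, pow_add]; ring
    _ ≤ (ph^(2*k2+2) * pv^(2*k1+2)) * ph^(2*(k1+k2)) := by
        have hle := pow_le_pow_left₀ hph.le hphv.le (2*k1+2)
        have h1 : (0:ℝ) ≤ ph^(2*k2+2) := by positivity
        have h2 : (0:ℝ) ≤ ph^(2*(k1+k2)) := by positivity
        apply mul_le_mul_of_nonneg_right _ h2
        exact mul_le_mul_of_nonneg_left hle h1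
  have hEq : lam ph ^ (2*k2+2) * lam pv ^ (2*k1+2) * ph ^ (2*(2*k1+2*k2+4)) =
      ((1-ph)^(2*k2+2) * (1-pv)^(2*k1+2)) *
        (ph ^ (2*(2*k1+2*k2+4)) / (ph^(2*k2+2) * pv^(2*k1+2))) := by
    rw [lam, lam, div_pow, div_pow]
    ring
  rw [hEq]
  have h2 : ph ^ (2*(2*k1+2*k2+4)) / (ph^(2*k2+2) * pv^(2*k1+2)) ≤ ph^(2*(k1+k2)) := by
    rw [div_le_iff₀ (by positivity)]
    calc ph ^ (2*(2*k1+2*k2+4)) ≤ (ph^(2*k2+2) * pv^(2*k1+2)) * ph^(2*(k1+k2)) := key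
    _ = ph^(2*(k1+k2)) * (ph^(2*k2+2) * pv^(2*k1+2)) := by ring
  have hnn : (0:ℝ) ≤ (1-ph)^(2*k2+2) * (1-pv)^(2*k1+2) :=
    mul_nonneg (pow_nonneg h1ph _) (pow_nonneg h1pv _)
  calc ((1-ph)^(2*k2+2) * (1-pv)^(2*k1+2)) *
        (ph ^ (2*(2*k1+2*k2+4)) / (ph^(2*k2+2) * pv^(2*k1+2)))
      ≤ ((1-ph)^(2*k2+2) * (1-pv)^(2*k1+2)) * ph^(2*(k1+k2)) :=
        mul_le_mul_of_nonneg_left h2 hnn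
  _ = (1-ph)^(2*k2+2) * (1-pv)^(2*k1+2) * ph^(2*(k1+k2)) := by ring

end TauAux

namespace TauAux

open MeasureTheory

lemma gammaN_finite (x1 x2 : ℤ) (h1 : 0 < x1) (h2 : x1 < x2) :
    (GammaN {0, (x1, x2)} (2*(x1+x2+2)).toNat).Finite := by
  set EBox : Finset LatticeEdge :=
    ((Finset.Icc ((-1:ℤ), (-1:ℤ)) ((x1, x2) : ℤ × ℤ)) ×ˢ (Finset.univ : Finset Bool)).image
      (fun q => ⟨q.1, q.2⟩) with hEB
  apply Set.Finite.subset (EBox.powerset : Finset (Finset LatticeEdge)).finite_toSet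
  intro γ hγ
  obtain ⟨p, hchar, -, -⟩ := extraction x1 x2 h1 h2 γ hγ
  rw [Finset.mem_coe, Finset.mem_powerset]
  intro e he
  have hx := (hchar e).mp he
  have hbox : ∀ v ∈ profSet p, 0 ≤ v.1 ∧ v.1 ≤ x1 ∧ 0 ≤ v.2 ∧ v.2 ≤ x2 := by
    rintro ⟨c, r⟩ ⟨ha, hb, hc, hd⟩
    exact ⟨ha, hb, le_trans (p.l_nonneg ha hb) hc, le_trans hd (p.u_le ha hb)⟩
  have hbase : -1 ≤ e.base.1 ∧ e.base.1 ≤ x1 ∧ -1 ≤ e.base.2 ∧ e.base.2 ≤ x2 := by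
    rcases horiz_cases e with hh | hh
    · have hsnd := snd_horiz e hh
      rcases hx with ⟨hA, -⟩ | ⟨hA, -⟩
      · have hB := hbox _ hA
        rw [fst_def] at hB
        omega
      · rw [hsnd] at hA
        have hB := hbox _ hA
        simp only at hB
        omega
    · have hsnd := snd_vert e hh
      rcases hx with ⟨hA, -⟩ | ⟨hA, -⟩
      · have hB := hbox _ hA
        rw [fst_def] at hB
        omega
      · rw [hsnd] at hA
        have hB := hbox _ hA
        simp only at hB
        omega
  rw [hEB]
  apply Finset.mem_image.mpr
  refine ⟨(e.base, e.horiz), ?_, rfl⟩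
  rw [Finset.mem_product]
  refine ⟨?_, Finset.mem_univ _⟩
  rw [Finset.mem_Icc]
  constructor
  · constructor <;> [exact hbase.1; exact hbase.2.2.1]
  · constructor <;> [exact hbase.2.1; exact hbase.2.2.2]

end TauAux

/-- lower bound on the truncated connectivity. -/
theorem tauF_lower_bound' (x1 x2 : ℤ) (h1 : 0 < x1) (h2 : x1 < x2)
    (ph pv : ℝ) (hph : 0 < ph) (hphv : ph < pv) (hpv : pv < 1)
    (P : Measure (LatticeEdge → Bool)) (hP : IsBernoulliProduct ph pv P) :
    (betaX (x1, x2) : ℝ) * lam ph ^ (2 * (x2 + 1)) * lam pv ^ (2 * (x1 + 1)) *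
        ph ^ (2 * normC (x1, x2)) ≤
      tauF P (0, 0) (x1, x2) := by
  open TauAux in
  have hph1 : ph < 1 := hphv.trans hpv
  have hpv0 : 0 < pv := hph.trans hphv
  haveI : IsProbabilityMeasure P := hP.1
  set k1 := x1.toNat with hk1
  set k2 := x2.toNat with hk2
  have hNval : normC (x1, x2) = (2*(x1+x2+2)).toNat := rfl
  have hGfin : (GammaN {0, (x1, x2)} (normC (x1, x2))).Finite := by
    rw [hNval]; exact TauAux.gammaN_finite x1 x2 h1 h2
  set T := hGfin.toFinset with hT
  have hext : ∀ γ ∈ T, ∃ p : TauAux.Prof x1 x2,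
      (∀ e : LatticeEdge, e ∈ γ ↔
        Xor' (e.fst ∈ TauAux.profSet p) (e.snd ∈ TauAux.profSet p)) ∧
      hCount γ = (2 * (x2 + 1)).toNat ∧ vCount γ = (2 * (x1 + 1)).toNat := by
    intro γ hγ
    rw [hT, Set.Finite.mem_toFinset, hNval] at hγ
    exact TauAux.extraction x1 x2 h1 h2 γ hγ
  choose pf hchar hhc hvc using hext
  set Ev : Finset LatticeEdge → Set (LatticeEdge → Bool) := fun γ =>
    if h : γ ∈ T then TauAux.contourEvent γ (TauAux.pathE (pf γ h)) else ∅ with hEv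
  have hEvT : ∀ γ (h : γ ∈ T), Ev γ = TauAux.contourEvent γ (TauAux.pathE (pf γ h)) :=
    fun γ h => dif_pos h
  have hdisj : (↑T : Set (Finset LatticeEdge)).PairwiseDisjoint Ev := by
    intro γ hγ γ' hγ' hne
    rw [Finset.mem_coe] at hγ hγ'
    show Disjoint (Ev γ) (Ev γ')
    rw [hEvT γ hγ, hEvT γ' hγ']
    exact TauAux.events_disjoint (by omega) (hchar γ hγ) (hchar γ' hγ') hne
  have hmeas : ∀ γ ∈ T, MeasurableSet (Ev γ) := by
    intro γ hγ
    rw [hEvT γ hγ]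
    exact TauAux.contourEvent_measurable _ _
  have hUnion := measure_biUnion_finset (μ := P) hdisj hmeas
  have hsub : (⋃ γ ∈ T, Ev γ) ⊆ {ω | SameFiniteCluster ω (0, 0) (x1, x2)} := by
    intro ω hω
    rw [Set.mem_iUnion₂] at hω
    obtain ⟨γ, hγ, hmem⟩ := hω
    rw [hEvT γ hγ] at hmem
    exact TauAux.event_subset_sfc (by omega) (hchar γ hγ) hmem
  set B : ℝ := (1-ph)^(2*k2+2) * (1-pv)^(2*k1+2) * ph^(2*(k1+k2)) with hB
  have hBnn : 0 ≤ B := by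
    rw [hB]
    have h1ph : (0:ℝ) ≤ 1 - ph := by linarith
    have h1pv : (0:ℝ) ≤ 1 - pv := by linarith
    positivity
  have hevent_ge : ∀ γ (h : γ ∈ T), ENNReal.ofReal B ≤ P (Ev γ) := by
    intro γ h
    rw [hEvT γ h]
    have hd : Disjoint γ (TauAux.pathE (pf γ h)) :=
      Finset.disjoint_right.mpr (TauAux.path_not_bd (hchar γ h))
    rw [TauAux.prob_event' hP hph hphv.le hpv γ _ hd]
    apply ENNReal.ofReal_le_ofReal
    have hc1 := TauAux.prod_closed_eq (ph := ph) (pv := pv) γ _ _ (hhc γ h) (hvc γ h)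
    have hexp1 : (2*(x2+1)).toNat = 2*k2+2 := by omega
    have hexp2 : (2*(x1+1)).toNat = 2*k1+2 := by omega
    rw [hc1, hexp1, hexp2, hB]
    have hcard : (TauAux.pathE (pf γ h)).card ≤ 2*(k1+k2) := by
      have := TauAux.card_pathE (pf γ h)
      omega
    have hopen := TauAux.prod_open_ge hph.le hph1.le hphv.le (TauAux.pathE (pf γ h))
      (2*(k1+k2)) hcard
    have h1ph : (0:ℝ) ≤ 1 - ph := by linarith
    have h1pv : (0:ℝ) ≤ 1 - pv := by linarith
    calc (1-ph)^(2*k2+2) * (1-pv)^(2*k1+2) * ph^(2*(k1+k2))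
        ≤ (1-ph)^(2*k2+2) * (1-pv)^(2*k1+2) * ∏ e ∈ TauAux.pathE (pf γ h), edgeProb ph pv e := by
          apply mul_le_mul_of_nonneg_left hopen
          positivity
    _ = (1-ph)^(2*k2+2) * (1-pv)^(2*k1+2) * ∏ e ∈ TauAux.pathE (pf γ h), edgeProb ph pv e := rfl
  have hsum : (T.card : ENNReal) * ENNReal.ofReal B ≤
      P {ω | SameFiniteCluster ω (0, 0) (x1, x2)} := by
    calc (T.card : ENNReal) * ENNReal.ofReal B = ∑ _γ ∈ T, ENNReal.ofReal B := by
          rw [Finset.sum_const, nsmul_eq_mul]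
    _ ≤ ∑ γ ∈ T, P (Ev γ) := Finset.sum_le_sum (fun γ h => hevent_ge γ h)
    _ = P (⋃ γ ∈ T, Ev γ) := hUnion.symm
    _ ≤ _ := measure_mono hsub
  have hfinP : P {ω | SameFiniteCluster ω (0, 0) (x1, x2)} ≠ ⊤ := measure_ne_top P _
  have htoReal : (T.card : ℝ) * B ≤ tauF P (0, 0) (x1, x2) := by
    have hmono := ENNReal.toReal_mono hfinP hsum
    rw [ENNReal.toReal_mul, ENNReal.toReal_natCast, ENNReal.toReal_ofReal hBnn] at hmono
    exact hmono
  have hbeta : betaX (x1, x2) = T.card := by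
    rw [betaX, Nat.card_coe_set_eq, Set.ncard_eq_toFinset_card _ hGfin]
  have hzpow1 : lam ph ^ (2 * (x2 + 1)) = lam ph ^ (2*k2+2) := by
    have : (2 * (x2 + 1) : ℤ) = ((2*k2+2 : ℕ) : ℤ) := by push_cast; omega
    rw [this, zpow_natCast]
  have hzpow2 : lam pv ^ (2 * (x1 + 1)) = lam pv ^ (2*k1+2) := by
    have : (2 * (x1 + 1) : ℤ) = ((2*k1+2 : ℕ) : ℤ) := by push_cast; omega
    rw [this, zpow_natCast]
  have hexpN : 2 * normC (x1, x2) = 2*(2*k1+2*k2+4) := by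
    rw [hNval]; omega
  calc (betaX (x1, x2) : ℝ) * lam ph ^ (2 * (x2 + 1)) * lam pv ^ (2 * (x1 + 1)) *
        ph ^ (2 * normC (x1, x2))
      = (T.card : ℝ) * (lam ph ^ (2*k2+2) * lam pv ^ (2*k1+2) * ph ^ (2*(2*k1+2*k2+4))) := by
        rw [hbeta, hzpow1, hzpow2, hexpN]; ring
  _ ≤ (T.card : ℝ) * B :=
        mul_le_mul_of_nonneg_left
          (by rw [hB]; exact TauAux.main_arith ph pv hph hphv hpv k1 k2)
          (Nat.cast_nonneg _)
  _ ≤ tauF P (0, 0) (x1, x2) := htoReal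

/-- lower bound on the truncated connectivity. For
`x = (x₁,x₂)` with `0 < x₁ < x₂` and `0 < p_h < p_v < 1`:
`τ^f_p(0,x) ≥ β_x λ_h^{2(x₂+1)} λ_v^{2(x₁+1)} p_h^{2‖x‖}`. -/
theorem tauF_lower_bound (x1 x2 : ℤ) (h1 : 0 < x1) (h2 : x1 < x2)
    (ph pv : ℝ) (hph : 0 < ph) (hphv : ph < pv) (hpv : pv < 1)
    (P : Measure (LatticeEdge → Bool)) (hP : IsBernoulliProduct ph pv P) :
    (betaX (x1, x2) : ℝ) * lam ph ^ (2 * (x2 + 1)) * lam pv ^ (2 * (x1 + 1)) *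
        ph ^ (2 * normC (x1, x2)) ≤
      tauF P (0, 0) (x1, x2) :=
  tauF_lower_bound' x1 x2 h1 h2 ph pv hph hphv hpv P hP
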